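/- arXiv:1905.00364 — 7 statements merged into one kernel-verified Lean document; each statement's English description precedes it below -/
import Mathlib

section
/- For a choice function defined by sequentially accepting candidates in a fixed priority order subject to maximum quotas on populations (with no minimum targets), the choice function satisfies the irrelevance of rejected contracts: if c is in C but not in Ch(C), then Ch(C \ {c}) = Ch(C). -/
/-! Shared definitions: PMA choice functions (greedy max-quota, Algorithm 1, Algorithm 2),
laminarity, deferred acceptance, and stability notions. -/

namespace PMA

variable {α : Type*} [DecidableEq α]

/-- A population constraint: a set of candidates together with a bound
(a maximum quota or a minimum target, depending on context). -/
abbrev Pop (α : Type*) := Finset α × ℕ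

/-- A set `S` respects all maximum quotas. -/
def Feasible (maxQ : List (Pop α)) (S : Finset α) : Prop :=
  ∀ q ∈ maxQ, (S ∩ q.1).card ≤ q.2

instance (maxQ : List (Pop α)) (S : Finset α) : Decidable (Feasible maxQ S) :=
  List.decidableBAll _ _

/-- Greedy pass: traverse candidates in the given order, accepting each candidate
whose addition violates no maximum quota. -/
def pass2 (maxQ : List (Pop α)) : List α → Finset α → Finset α
  | [], S => S
  | c :: rest, S =>
      if Feasible maxQ (insert c S) then pass2 maxQ rest (insert c S)
      else pass2 maxQ rest S

/-- Candidate `c` belongs to some population whose minimum target is not yet met by `S`. -/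
def HelpsMin (minT : List (Pop α)) (S : Finset α) (c : α) : Prop :=
  ∃ p ∈ minT, c ∈ p.1 ∧ (S ∩ p.1).card < p.2

instance (minT : List (Pop α)) (S : Finset α) (c : α) : Decidable (HelpsMin minT S c) :=
  List.decidableBEx _ _

/-- First pass of Algorithm 1: traverse candidates in order, accepting (subject to
maximum quotas) those who help meet some unmet minimum target. -/
def pass1 (maxQ minT : List (Pop α)) : List α → Finset α → Finset α
  | [], S => S
  | c :: rest, S =>
      if HelpsMin minT S c ∧ Feasible maxQ (insert c S) then
        pass1 maxQ minT rest (insert c S)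
      else pass1 maxQ minT rest S

/-- Algorithm 1 choice function: two passes over the candidates of `C`,
in the priority order given by the list `order`. -/
def choice1 (maxQ minT : List (Pop α)) (order : List α) (C : Finset α) : Finset α :=
  pass2 maxQ (order.filter fun c => decide (c ∈ C))
    (pass1 maxQ minT (order.filter fun c => decide (c ∈ C)) ∅)

/-- The greedy max-quota choice function (no minimum targets), with the priority order
given by the linear order on candidates. -/
def greedy [LinearOrder α] (maxQ : List (Pop α)) (C : Finset α) : Finset α :=
  pass2 maxQ (C.sort (· ≤ ·)) ∅

/-- The greedy max-quota choice function with an explicit priority list. -/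
def greedyL (maxQ : List (Pop α)) (order : List α) (C : Finset α) : Finset α :=
  pass2 maxQ (order.filter fun c => decide (c ∈ C)) ∅

/-- The number of populations with a minimum target not yet met by `S` to which `c` belongs. -/
def nUnmet (minT : List (Pop α)) (S : Finset α) (c : α) : ℕ :=
  (minT.filter fun p => decide (c ∈ p.1 ∧ (S ∩ p.1).card < p.2)).length

/-- The candidates of `R` maximizing the number of unmet minimum targets they help. -/
def bestSet [LinearOrder α] (minT : List (Pop α)) (S R : Finset α) : Finset α :=
  R.filter fun c => ∀ d ∈ R, nUnmet minT S d ≤ nUnmet minT S c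

lemma bestSet_nonempty [LinearOrder α] (minT : List (Pop α)) (S : Finset α) {R : Finset α}
    (hR : R.Nonempty) : (bestSet minT S R).Nonempty := by
  obtain ⟨b, hb, hmax⟩ := R.exists_max_image (nUnmet minT S) hR
  exact ⟨b, Finset.mem_filter.mpr ⟨hb, hmax⟩⟩

/-- The next candidate processed by Algorithm 2: among `R`, maximize the number of unmet
minimum targets helped, breaking ties by the priority order. -/
def pick [LinearOrder α] (minT : List (Pop α)) (S : Finset α) {R : Finset α}
    (hR : R.Nonempty) : α :=
  (bestSet minT S R).min' (bestSet_nonempty minT S hR)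

lemma pick_mem [LinearOrder α] (minT : List (Pop α)) (S : Finset α) {R : Finset α}
    (hR : R.Nonempty) : pick minT S hR ∈ R :=
  Finset.filter_subset _ _ (Finset.min'_mem _ _)

/-- Main loop of Algorithm 2: `R` is the set of unprocessed candidates, `S` the chosen set. -/
def choice2Go [LinearOrder α] (maxQ minT : List (Pop α)) (R S : Finset α) : Finset α :=
  if hR : R.Nonempty then
    choice2Go maxQ minT (R.erase (pick minT S hR))
      (if Feasible maxQ (insert (pick minT S hR) S) then insert (pick minT S hR) S else S)
  else S
  termination_by R.card
  decreasing_by exact Finset.card_erase_lt_of_mem (pick_mem minT S hR)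

/-- Algorithm 2 choice function. -/
def choice2 [LinearOrder α] (maxQ minT : List (Pop α)) (C : Finset α) : Finset α :=
  choice2Go maxQ minT C ∅

/-- A family of populations is laminar: any two are disjoint or nested. -/
def Laminar (pops : List (Pop α)) : Prop :=
  ∀ p ∈ pops, ∀ q ∈ pops, Disjoint p.1 q.1 ∨ p.1 ⊆ q.1 ∨ q.1 ⊆ p.1

/-- The sets of the populations carrying a positive minimum target. -/
def minTargetSets (minT : List (Pop α)) : Set (Finset α) :=
  {P | ∃ t, (P, t) ∈ minT ∧ 0 < t}

/-- A family of sets is a union of pairwise-disjoint chains: it can be partitioned into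
subfamilies, each totally ordered by inclusion, with sets in different subfamilies disjoint. -/
def UnionOfDisjointChains (F : Set (Finset α)) : Prop :=
  ∃ Part : Set (Set (Finset α)), ⋃₀ Part = F ∧ (∀ c ∈ Part, IsChain (· ⊆ ·) c) ∧
    Part.Pairwise fun c c' => ∀ P ∈ c, ∀ Q ∈ c', Disjoint P Q

section DA

variable {β : Type*} [Fintype α] [DecidableEq β]

/-- The institution to which candidate `c` currently applies: the most-preferred institution
on her list that has not yet rejected her (`none` if her list is exhausted). -/
def applyTo (prefs : α → List β) (rej : α → Finset β) (c : α) : Option β :=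
  (prefs c).find? fun m => decide (m ∉ rej c)

/-- The set of candidates currently applying to institution `m`. -/
def applicants (prefs : α → List β) (rej : α → Finset β) (m : β) : Finset α :=
  Finset.univ.filter fun c => applyTo prefs rej c = some m

/-- One round of candidate-proposing deferred acceptance: each candidate applies to her
most-preferred not-yet-rejecting institution; each institution keeps its choice from its
applicants and rejects the rest. `rej c` is the set of institutions that have rejected `c`. -/
def daRound (Ch : β → Finset α → Finset α) (prefs : α → List β) (rej : α → Finset β) :
    α → Finset β := fun c =>
  match applyTo prefs rej c with
  | none => rej c
  | some m => if c ∈ Ch m (applicants prefs rej m) then rej c else insert m (rej c)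

variable [Fintype β]

/-- The rejection sets at the end of candidate-proposing deferred acceptance (running enough
rounds to guarantee that a fixed point, i.e. a round with no rejections, has been reached). -/
def daRej (Ch : β → Finset α → Finset α) (prefs : α → List β) : α → Finset β :=
  (daRound Ch prefs)^[Fintype.card α * Fintype.card β + 1] fun _ => ∅

/-- The matching produced by candidate-proposing deferred acceptance. -/
def daMatch (Ch : β → Finset α → Finset α) (prefs : α → List β) : α → Option β :=
  applyTo prefs (daRej Ch prefs)

end DA

section Stability

variable {β : Type*} [DecidableEq β]

/-- Candidate `c` strictly prefers institution `m` to the assignment `o`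
(being unmatched, `none`, is worse than any institution on her list). -/
def Prefers (prefs : α → List β) (c : α) (m : β) : Option β → Prop
  | none => m ∈ prefs c
  | some m' => m ∈ prefs c ∧ (prefs c).idxOf m < (prefs c).idxOf m'

/-- Candidate `c` weakly prefers assignment `o` to assignment `o'`. -/
def WeaklyPrefers (prefs : α → List β) (c : α) (o o' : Option β) : Prop :=
  o = o' ∨ ∃ m, o = some m ∧ Prefers prefs c m o'

variable [Fintype α]

/-- The set of candidates assigned to institution `m` by the matching `M`. -/
def assignedTo (M : α → Option β) (m : β) : Finset α :=
  Finset.univ.filter fun c => M c = some m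

/-- Individual rationality: candidates are matched only to listed institutions, and each
institution chooses all candidates assigned to it. -/
def IndivRational (Ch : β → Finset α → Finset α) (prefs : α → List β) (M : α → Option β) :
    Prop :=
  (∀ c m, M c = some m → m ∈ prefs c) ∧ ∀ m, Ch m (assignedTo M m) = assignedTo M m

/-- `(c, m)` is a blocking pair for the matching `M`. -/
def Blocks (Ch : β → Finset α → Finset α) (prefs : α → List β) (M : α → Option β)
    (c : α) (m : β) : Prop :=
  Prefers prefs c m (M c) ∧ c ∈ Ch m (insert c (assignedTo M m))

/-- Stability: individual rationality plus no blocking pairs. -/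
def StableMatching (Ch : β → Finset α → Finset α) (prefs : α → List β) (M : α → Option β) :
    Prop :=
  IndivRational Ch prefs M ∧ ∀ c m, ¬ Blocks Ch prefs M c m

/-- One step of the candidate-Pareto-improvement stage: a blocking pair `(m, c)` such that
`c` can be added to `m` without rejecting anyone is resolved by assigning `c` to `m`. -/
def ParetoStep [DecidableEq α] (Ch : β → Finset α → Finset α) (prefs : α → List β)
    (M M' : α → Option β) : Prop :=
  ∃ m c, Prefers prefs c m (M c) ∧
    Ch m (insert c (assignedTo M m)) = insert c (assignedTo M m) ∧
    M' = Function.update M c (some m)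

end Stability

end PMA


open PMA

lemma pass2_subset {α : Type*} [DecidableEq α] (maxQ : List (Pop α)) :
    ∀ (l : List α) (S : Finset α), S ⊆ pass2 maxQ l S
  | [], S => subset_rfl
  | a :: l, S => by
      unfold pass2
      split
      · exact (Finset.subset_insert _ _).trans (pass2_subset maxQ l _)
      · exact pass2_subset maxQ l S

lemma pass2_filter_ne {α : Type*} [DecidableEq α] (maxQ : List (Pop α)) (c : α) :
    ∀ (l : List α) (S : Finset α), c ∉ pass2 maxQ l S → c ∉ S →
      pass2 maxQ (l.filter fun a => a ≠ c) S = pass2 maxQ l S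
  | [], S, _, _ => rfl
  | a :: l, S, h, hS => by
      by_cases hac : a = c
      · subst hac
        have hfeas : ¬ Feasible maxQ (insert a S) := by
          intro hf
          apply h
          unfold pass2
          rw [if_pos hf]
          exact pass2_subset maxQ l _ (Finset.mem_insert_self a S)
        have hstep : pass2 maxQ (a :: l) S = pass2 maxQ l S := by
          rw [pass2, if_neg hfeas]
        rw [hstep] at h ⊢
        have hfilt : (a :: l).filter (fun x => x ≠ a) = l.filter (fun x => x ≠ a) := by
          simp [List.filter_cons]
        rw [hfilt]
        exact pass2_filter_ne maxQ a l S h hS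
      · have hfilt : ((a :: l).filter fun x => x ≠ c) = a :: (l.filter fun x => x ≠ c) := by
          simp [List.filter_cons, hac]
        rw [hfilt]
        unfold pass2
        split
        · have h' : c ∉ pass2 maxQ l (insert a S) := by
            unfold pass2 at h
            rwa [if_pos (by assumption)] at h
          exact pass2_filter_ne maxQ c l (insert a S) h'
            (by simp [Finset.mem_insert, hS, Ne.symm hac])
        · have h' : c ∉ pass2 maxQ l S := by
            unfold pass2 at h
            rwa [if_neg (by assumption)] at h
          exact pass2_filter_ne maxQ c l S h' hS

lemma sort_erase_eq_filter {α : Type*} [DecidableEq α] [LinearOrder α] (C : Finset α) (c : α) :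
    (C.erase c).sort (· ≤ ·) = (C.sort (· ≤ ·)).filter fun a => a ≠ c := by
  apply List.Perm.eq_of_pairwise' (Finset.pairwise_sort _ _)
    ((Finset.pairwise_sort C (· ≤ ·)).filter _)
  have h1 : List.Perm ((C.erase c).sort (· ≤ ·)) ((C.erase c).toList) :=
    Finset.sort_perm_toList _ _
  have h2 : List.Perm ((C.sort (· ≤ ·)).filter fun a => a ≠ c)
      (C.toList.filter fun a => a ≠ c) :=
    (Finset.sort_perm_toList _ _).filter _
  refine h1.trans (List.Perm.trans ?_ h2.symm)
  rw [← Multiset.coe_eq_coe]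
  have : C.erase c = C.filter fun a => a ≠ c := (Finset.filter_ne' C c).symm
  rw [this]
  simp only [Finset.toList, Finset.filter_val]
  conv_lhs => rw [← Multiset.coe_toList C.val]
  simp only [Multiset.filter_coe, Multiset.coe_eq_coe]
  exact Multiset.coe_eq_coe.mp (Multiset.coe_toList _)

/-- The greedy max-quota choice function satisfies irrelevance of
rejected contracts: if `c ∈ C` but `c ∉ Ch(C)`, then `Ch(C \ {c}) = Ch(C)`. -/
theorem greedy_irc {α : Type*} [DecidableEq α] [LinearOrder α]
    (maxQ : List (Pop α)) (C : Finset α) (c : α)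
    (hc : c ∈ C) (hrej : c ∉ greedy maxQ C) :
    greedy maxQ (C.erase c) = greedy maxQ C := by
  unfold greedy
  rw [sort_erase_eq_filter]
  exact pass2_filter_ne maxQ c _ ∅ hrej (Finset.notMem_empty c)
end

section
/- If the family of populations of a PMA is laminar (every two populations are either disjoint or one contains the other) and all constraints are maximum quotas (no minimum targets), then the greedy choice function is substitutable: for every candidate set C and every c in C, Ch(C) \ {c} is a subset of Ch(C \ {c}). -/
open PMA

namespace GreedySub

open Finset

variable {α : Type*} [DecidableEq α]

lemma feasible_empty (maxQ : List (Pop α)) : Feasible maxQ (∅ : Finset α) := by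
  intro q hq; simp

lemma feasible_mono {maxQ : List (Pop α)} {S T : Finset α} (h : S ⊆ T)
    (hT : Feasible maxQ T) : Feasible maxQ S := fun q hq =>
  le_trans (Finset.card_le_card (Finset.inter_subset_inter h (subset_refl _))) (hT q hq)

/-- Rank: maximum cardinality of a feasible subset. -/
def rk (maxQ : List (Pop α)) (A : Finset α) : ℕ :=
  (A.powerset.filter (fun S => Feasible maxQ S)).sup Finset.card

lemma le_rk {maxQ : List (Pop α)} {A B : Finset α} (hBA : B ⊆ A)
    (hB : Feasible maxQ B) : B.card ≤ rk maxQ A :=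
  Finset.le_sup (by simp [Finset.mem_filter, Finset.mem_powerset, hBA, hB])

lemma exists_rk (maxQ : List (Pop α)) (A : Finset α) :
    ∃ B, B ⊆ A ∧ Feasible maxQ B ∧ B.card = rk maxQ A := by
  have hne : (A.powerset.filter (fun S => Feasible maxQ S)).Nonempty :=
    ⟨∅, by simp [Finset.mem_filter, feasible_empty]⟩
  obtain ⟨B, hB, hBeq⟩ := Finset.exists_mem_eq_sup _ hne Finset.card
  rw [Finset.mem_filter, Finset.mem_powerset] at hB
  exact ⟨B, hB.1, hB.2, hBeq.symm⟩

lemma rk_mono {maxQ : List (Pop α)} {A B : Finset α} (h : A ⊆ B) :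
    rk maxQ A ≤ rk maxQ B := by
  obtain ⟨B', hB'A, hB'f, hB'c⟩ := exists_rk maxQ A
  exact hB'c ▸ le_rk (hB'A.trans h) hB'f

lemma rk_insert_le (maxQ : List (Pop α)) (A : Finset α) (x : α) :
    rk maxQ (insert x A) ≤ rk maxQ A + 1 := by
  obtain ⟨B, hBA, hBf, hBc⟩ := exists_rk maxQ (insert x A)
  have h1 : B.erase x ⊆ A := by
    intro y hy
    rw [Finset.mem_erase] at hy
    rcases Finset.mem_insert.mp (hBA hy.2) with h | h
    · exact absurd h hy.1
    · exact h
  have h2 : (B.erase x).card ≤ rk maxQ A :=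
    le_rk h1 (feasible_mono (Finset.erase_subset _ _) hBf)
  by_cases hx : x ∈ B
  · rw [Finset.card_erase_of_mem hx] at h2; omega
  · rw [Finset.erase_eq_of_notMem hx] at h2; omega

/-- The exchange property for laminar max-quota families. -/
lemma exchange {maxQ : List (Pop α)} (hlam : Laminar maxQ) {I J : Finset α}
    (hI : Feasible maxQ I) (hJ : Feasible maxQ J) (hcard : I.card < J.card) :
    ∃ x ∈ J \ I, Feasible maxQ (insert x I) := by
  classical
  by_contra hcon
  push_neg at hcon
  -- every x in J \ I lies in some population that is full in I
  have hfull : ∀ x ∈ J \ I, ∃ p ∈ maxQ, x ∈ p.1 ∧ (I ∩ p.1).card = p.2 := by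
    intro x hx
    have h := hcon x hx
    simp only [Feasible, not_forall] at h
    obtain ⟨p, hp, hcard'⟩ := h
    rw [not_le] at hcard'
    have hxp : x ∈ p.1 := by
      by_contra hxp
      rw [Finset.insert_inter_of_notMem hxp] at hcard'
      exact absurd (hI p hp) (not_le.mpr hcard')
    refine ⟨p, hp, hxp, le_antisymm (hI p hp) ?_⟩
    rw [Finset.insert_inter_of_mem hxp] at hcard'
    have := Finset.card_insert_le x (I ∩ p.1)
    omega
  -- for each x, pick a maximal full population containing x
  have hmax : ∀ x : α, ∃ P : Pop α, x ∈ J \ I →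
      P ∈ maxQ ∧ x ∈ P.1 ∧ (I ∩ P.1).card = P.2 ∧
        ∀ q ∈ maxQ, x ∈ q.1 → (I ∩ q.1).card = q.2 → q.1 ⊆ P.1 := by
    intro x
    by_cases hx : x ∈ J \ I
    · obtain ⟨p, hp, hxp, hfp⟩ := hfull x hx
      have hne : (maxQ.toFinset.filter
          (fun q => x ∈ q.1 ∧ (I ∩ q.1).card = q.2)).Nonempty :=
        ⟨p, by simp [Finset.mem_filter, List.mem_toFinset, hp, hxp, hfp]⟩
      obtain ⟨P, hP, hPmax⟩ := Finset.exists_max_image _ (fun q => q.1.card) hne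
      rw [Finset.mem_filter, List.mem_toFinset] at hP
      refine ⟨P, fun _ => ⟨hP.1, hP.2.1, hP.2.2, ?_⟩⟩
      intro q hq hxq hfq
      have hqmem : q ∈ maxQ.toFinset.filter
          (fun q => x ∈ q.1 ∧ (I ∩ q.1).card = q.2) := by
        simp [Finset.mem_filter, List.mem_toFinset, hq, hxq, hfq]
      have hle : q.1.card ≤ P.1.card := hPmax q hqmem
      rcases hlam q hq P hP.1 with hdis | hsub | hsub
      · exact absurd (Finset.not_disjoint_iff.mpr ⟨x, hxq, hP.2.1⟩) (fun h => h hdis)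
      · exact hsub
      · exact le_of_eq (Finset.eq_of_subset_of_card_le hsub hle).symm
    · exact ⟨(∅, 0), fun hx' => absurd hx' hx⟩
  choose f hf using hmax
  set D : Finset (Finset α) := (J \ I).image (fun x => (f x).1) with hD
  set U : Finset α := D.biUnion id with hU
  have hdisj : ∀ P ∈ D, ∀ Q ∈ D, P ≠ Q → Disjoint P Q := by
    intro P hP Q hQ hne
    obtain ⟨x, hx, rfl⟩ := Finset.mem_image.mp hP
    obtain ⟨y, hy, rfl⟩ := Finset.mem_image.mp hQ
    obtain ⟨hxm, hxin, hxfull, hxmax⟩ := hf x hx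
    obtain ⟨hym, hyin, hyfull, hymax⟩ := hf y hy
    rcases hlam (f x) hxm (f y) hym with hd | hs | hs
    · exact hd
    · exact absurd (le_antisymm hs (hxmax (f y) hym (hs hxin) hyfull)) hne
    · exact absurd (le_antisymm (hymax (f x) hxm (hs hyin) hxfull) hs) hne
  have hJU : J \ I ⊆ U := by
    intro a ha
    exact Finset.mem_biUnion.mpr ⟨(f a).1, Finset.mem_image_of_mem _ ha, (hf a ha).2.1⟩
  have hinterJ : J ∩ U = D.biUnion (fun P => J ∩ P) := by
    ext a
    simp only [hU, Finset.mem_inter, Finset.mem_biUnion, id]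
    tauto
  have hinterI : I ∩ U = D.biUnion (fun P => I ∩ P) := by
    ext a
    simp only [hU, Finset.mem_inter, Finset.mem_biUnion, id]
    tauto
  have hdisjJ : ∀ P ∈ D, ∀ Q ∈ D, P ≠ Q → Disjoint (J ∩ P) (J ∩ Q) := fun P hP Q hQ hne =>
    (hdisj P hP Q hQ hne).mono Finset.inter_subset_right Finset.inter_subset_right
  have hdisjI : ∀ P ∈ D, ∀ Q ∈ D, P ≠ Q → Disjoint (I ∩ P) (I ∩ Q) := fun P hP Q hQ hne =>
    (hdisj P hP Q hQ hne).mono Finset.inter_subset_right Finset.inter_subset_right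
  have hbound : ∀ P ∈ D, (J ∩ P).card ≤ (I ∩ P).card := by
    intro P hP
    obtain ⟨x, hx, rfl⟩ := Finset.mem_image.mp hP
    obtain ⟨hxm, hxin, hxfull, _⟩ := hf x hx
    exact le_trans (hJ (f x) hxm) hxfull.ge
  have hcardJU : (J ∩ U).card ≤ (I ∩ U).card := by
    rw [hinterJ, hinterI, Finset.card_biUnion hdisjJ, Finset.card_biUnion hdisjI]
    exact Finset.sum_le_sum hbound
  have hsdiff : J \ U ⊆ I \ U := by
    intro a ha
    rw [Finset.mem_sdiff] at ha ⊢
    refine ⟨?_, ha.2⟩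
    by_contra haI
    exact ha.2 (hJU (Finset.mem_sdiff.mpr ⟨ha.1, haI⟩))
  have h1 : (J ∩ U).card + (J \ U).card = J.card := Finset.card_inter_add_card_sdiff J U
  have h2 : (I ∩ U).card + (I \ U).card = I.card := Finset.card_inter_add_card_sdiff I U
  have h3 : (J \ U).card ≤ (I \ U).card := Finset.card_le_card hsdiff
  omega

/-- A maximal feasible subset of `A` is maximum (has cardinality `rk A`). -/
lemma maximal_rk {maxQ : List (Pop α)} (hlam : Laminar maxQ) {A B : Finset α}
    (hBA : B ⊆ A) (hB : Feasible maxQ B)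
    (hmax : ∀ y ∈ A, y ∉ B → ¬ Feasible maxQ (insert y B)) : B.card = rk maxQ A := by
  refine le_antisymm (le_rk hBA hB) ?_
  by_contra h
  push_neg at h
  obtain ⟨J, hJA, hJf, hJc⟩ := exists_rk maxQ A
  obtain ⟨y, hy, hyf⟩ := exchange hlam hB hJf (by omega)
  rw [Finset.mem_sdiff] at hy
  exact hmax y (hJA hy.1) hy.2 hyf

lemma pass2_append (maxQ : List (Pop α)) (L₁ L₂ : List α) (S : Finset α) :
    pass2 maxQ (L₁ ++ L₂) S = pass2 maxQ L₂ (pass2 maxQ L₁ S) := by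
  induction L₁ generalizing S with
  | nil => simp [pass2]
  | cons a l ih =>
    simp only [List.cons_append, pass2]
    split <;> apply ih

lemma subset_pass2 (maxQ : List (Pop α)) (L : List α) (S : Finset α) :
    S ⊆ pass2 maxQ L S := by
  induction L generalizing S with
  | nil => simp [pass2]
  | cons a l ih =>
    simp only [pass2]
    split
    · exact (Finset.subset_insert a S).trans (ih _)
    · exact ih _

lemma pass2_subset (maxQ : List (Pop α)) (L : List α) (S : Finset α) :
    pass2 maxQ L S ⊆ S ∪ L.toFinset := by
  induction L generalizing S with
  | nil => simp [pass2]
  | cons a l ih =>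
    simp only [pass2]
    split
    · refine (ih _).trans ?_
      intro y hy
      rcases Finset.mem_union.mp hy with h | h
      · rcases Finset.mem_insert.mp h with h | h
        · simp [h]
        · exact Finset.mem_union_left _ h
      · simp [Finset.mem_union, List.mem_toFinset] at h ⊢
        tauto
    · refine (ih _).trans ?_
      intro y hy
      rcases Finset.mem_union.mp hy with h | h
      · exact Finset.mem_union_left _ h
      · simp [Finset.mem_union, List.mem_toFinset] at h ⊢
        tauto

lemma pass2_feasible {maxQ : List (Pop α)} {L : List α} {S : Finset α}
    (hS : Feasible maxQ S) : Feasible maxQ (pass2 maxQ L S) := by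
  induction L generalizing S with
  | nil => simpa [pass2]
  | cons a l ih =>
    simp only [pass2]
    split
    · exact ih (by assumption)
    · exact ih hS

lemma pass2_maximal {maxQ : List (Pop α)} {L : List α} {S : Finset α} :
    ∀ x ∈ L, x ∉ pass2 maxQ L S → ¬ Feasible maxQ (insert x (pass2 maxQ L S)) := by
  induction L generalizing S with
  | nil => simp
  | cons a l ih =>
    intro x hx hxout
    simp only [pass2] at hxout ⊢
    by_cases hacc : Feasible maxQ (insert a S)
    · rw [if_pos hacc] at hxout ⊢
      rcases List.mem_cons.mp hx with rfl | hxl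
      · exact absurd (subset_pass2 maxQ l _ (Finset.mem_insert_self x S)) hxout
      · exact ih x hxl hxout
    · rw [if_neg hacc] at hxout ⊢
      rcases List.mem_cons.mp hx with rfl | hxl
      · intro hfeas
        exact hacc (feasible_mono
          (Finset.insert_subset_insert _ (subset_pass2 maxQ l S)) hfeas)
      · exact ih x hxl hxout

/-- Characterization of greedy acceptance via rank increase over the strict prefix. -/
lemma greedy_mem_iff [LinearOrder α] {maxQ : List (Pop α)} (hlam : Laminar maxQ)
    {C : Finset α} {x : α} (hx : x ∈ C) :
    x ∈ greedy maxQ C ↔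
      rk maxQ (C.filter (· < x)) < rk maxQ (insert x (C.filter (· < x))) := by
  classical
  set L := C.sort (· ≤ ·) with hLdef
  have hs : List.Pairwise (· ≤ ·) L := Finset.pairwise_sort _ _
  have hnd : L.Nodup := Finset.sort_nodup _ _
  have hLC : L.toFinset = C := Finset.sort_toFinset _ _
  have hxL : x ∈ L := (Finset.mem_sort _).mpr hx
  obtain ⟨L₁, L₂, hL⟩ := List.append_of_mem hxL
  have hpair := (List.pairwise_append.mp (hL ▸ hs))
  have hnd' := hL ▸ hnd
  have hndapp := List.nodup_append.mp hnd'
  have hxL₂ : x ∉ L₂ := (List.nodup_cons.mp hndapp.2.1).1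
  have hpred : L₁.toFinset = C.filter (· < x) := by
    ext y
    simp only [List.mem_toFinset, Finset.mem_filter]
    constructor
    · intro hy
      have hyC : y ∈ C := by
        rw [← hLC, hL]
        simp [hy]
      have hyx : y ≤ x := hpair.2.2 y hy x List.mem_cons_self
      have hne : y ≠ x := by
        intro h
        exact hndapp.2.2 y hy x List.mem_cons_self h
      exact ⟨hyC, lt_of_le_of_ne hyx hne⟩
    · intro ⟨hyC, hyx⟩
      have hyL : y ∈ L := (Finset.mem_sort _).mpr hyC
      rw [hL] at hyL
      rcases List.mem_append.mp hyL with h | h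
      · exact h
      · rcases List.mem_cons.mp h with rfl | h
        · exact absurd hyx (lt_irrefl _)
        · have : x ≤ y := (List.pairwise_cons.mp hpair.2.1).1 y h
          exact absurd hyx (not_lt.mpr this)
  set G₁ := pass2 maxQ L₁ ∅ with hG₁
  have hG₁sub : G₁ ⊆ C.filter (· < x) := by
    rw [← hpred]
    simpa using pass2_subset maxQ L₁ ∅
  have hG₁f : Feasible maxQ G₁ := pass2_feasible (feasible_empty maxQ)
  have hG₁max : ∀ y ∈ C.filter (· < x), y ∉ G₁ → ¬ Feasible maxQ (insert y G₁) := by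
    intro y hy
    rw [← hpred, List.mem_toFinset] at hy
    exact pass2_maximal y hy
  have hG₁rk : G₁.card = rk maxQ (C.filter (· < x)) :=
    maximal_rk hlam hG₁sub hG₁f hG₁max
  have hxG₁ : x ∉ G₁ := fun h => absurd (Finset.mem_filter.mp (hG₁sub h)).2 (lt_irrefl x)
  have hgr : greedy maxQ C = pass2 maxQ (x :: L₂) G₁ := by
    rw [greedy, ← hLdef, hL, pass2_append]
  by_cases hacc : Feasible maxQ (insert x G₁)
  · have hmem : x ∈ greedy maxQ C := by
      rw [hgr]
      simp only [pass2, if_pos hacc]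
      exact subset_pass2 maxQ L₂ _ (Finset.mem_insert_self x G₁)
    have hrk : rk maxQ (C.filter (· < x)) < rk maxQ (insert x (C.filter (· < x))) := by
      have h1 : (insert x G₁).card ≤ rk maxQ (insert x (C.filter (· < x))) :=
        le_rk (Finset.insert_subset_insert _ hG₁sub) hacc
      rw [Finset.card_insert_of_notMem hxG₁, hG₁rk] at h1
      omega
    simp [hmem, hrk]
  · have hmem : x ∉ greedy maxQ C := by
      rw [hgr]
      simp only [pass2, if_neg hacc]
      intro h
      rcases Finset.mem_union.mp (pass2_subset maxQ L₂ G₁ h) with h | h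
      · exact hxG₁ h
      · exact hxL₂ (List.mem_toFinset.mp h)
    have hrk : rk maxQ (insert x (C.filter (· < x))) = rk maxQ (C.filter (· < x)) := by
      rw [← hG₁rk]
      refine (maximal_rk hlam (hG₁sub.trans (Finset.subset_insert _ _)) hG₁f ?_).symm
      intro y hy hyG
      rcases Finset.mem_insert.mp hy with rfl | hy
      · exact hacc
      · exact hG₁max y hy hyG
    simp [hmem, hrk]

/-- Local submodularity: if adding `x` raises the rank of `insert c A`, it raises
the rank of `A`. -/
lemma submod {maxQ : List (Pop α)} (hlam : Laminar maxQ) {A : Finset α} {c x : α}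
    (hcA : c ∉ A)
    (h : rk maxQ (insert c A) < rk maxQ (insert x (insert c A))) :
    rk maxQ A < rk maxQ (insert x A) := by
  by_contra hno
  push_neg at hno
  have hxA : rk maxQ (insert x A) = rk maxQ A :=
    le_antisymm hno (rk_mono (Finset.subset_insert _ _))
  have hcomm : insert x (insert c A) = insert c (insert x A) := Finset.insert_comm _ _ _
  have hub : rk maxQ (insert x (insert c A)) ≤ rk maxQ A + 1 := by
    rw [hcomm]
    exact le_trans (rk_insert_le maxQ (insert x A) c) (by omega)
  have hcAge : rk maxQ A ≤ rk maxQ (insert c A) := rk_mono (Finset.subset_insert _ _)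
  have hcAeq : rk maxQ (insert c A) = rk maxQ A := by omega
  have hxcA : rk maxQ (insert x (insert c A)) = rk maxQ A + 1 := by omega
  obtain ⟨B, hBA, hBf, hBc⟩ := exists_rk maxQ A
  obtain ⟨M, hMA, hMf, hMc⟩ := exists_rk maxQ (insert x (insert c A))
  obtain ⟨z, hz, hzf⟩ := exchange hlam hBf hMf (by omega)
  rw [Finset.mem_sdiff] at hz
  have hzB : z ∉ B := hz.2
  rcases Finset.mem_insert.mp (hMA hz.1) with rfl | hz'
  · -- z = x
    have : (insert z B).card ≤ rk maxQ (insert z A) :=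
      le_rk (Finset.insert_subset_insert _ hBA) hzf
    rw [Finset.card_insert_of_notMem hzB, hBc, hxA] at this
    omega
  · rcases Finset.mem_insert.mp hz' with rfl | hz'' 
    · -- z = c
      have hzB' : z ∉ B := fun h => hcA (hBA h)
      have : (insert z B).card ≤ rk maxQ (insert z A) :=
        le_rk (Finset.insert_subset_insert _ hBA) hzf
      rw [Finset.card_insert_of_notMem hzB', hBc, hcAeq] at this
      omega
    · -- z ∈ A
      have : (insert z B).card ≤ rk maxQ A :=
        le_rk (Finset.insert_subset hz'' hBA) hzf
      rw [Finset.card_insert_of_notMem hzB, hBc] at this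
      omega

lemma greedy_subset [LinearOrder α] (maxQ : List (Pop α)) (C : Finset α) :
    greedy maxQ C ⊆ C := by
  rw [greedy]
  refine (pass2_subset maxQ _ ∅).trans ?_
  simp [Finset.sort_toFinset]

end GreedySub

/-- For laminar populations with maximum quotas only, the greedy
choice function is substitutable: `Ch(C) \ {c} ⊆ Ch(C \ {c})` for every `c ∈ C`. -/
theorem greedy_substitutable {α : Type*} [DecidableEq α] [LinearOrder α]
    (maxQ : List (Pop α)) (hlam : Laminar maxQ)
    (C : Finset α) (c : α) (hc : c ∈ C) :
    (greedy maxQ C).erase c ⊆ greedy maxQ (C.erase c) := by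
  classical
  intro x hx
  rw [Finset.mem_erase] at hx
  obtain ⟨hxc, hxg⟩ := hx
  have hxC : x ∈ C := GreedySub.greedy_subset maxQ C hxg
  have h1 := (GreedySub.greedy_mem_iff hlam hxC).mp hxg
  have hxC' : x ∈ C.erase c := Finset.mem_erase.mpr ⟨hxc, hxC⟩
  rw [GreedySub.greedy_mem_iff hlam hxC']
  have hpred : (C.erase c).filter (· < x) = (C.filter (· < x)).erase c := by
    ext y
    simp only [Finset.mem_filter, Finset.mem_erase]
    tauto
  rw [hpred]
  by_cases hcp : c ∈ C.filter (· < x)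
  · have hins : insert c ((C.filter (· < x)).erase c) = C.filter (· < x) :=
      Finset.insert_erase hcp
    rw [← hins] at h1
    exact GreedySub.submod hlam (Finset.notMem_erase _ _) h1
  · rw [Finset.erase_eq_of_notMem hcp]
    exact h1
end

section
/- If the family of populations of a PMA is laminar with only maximum quotas (no minimum targets), then for every candidate set C and c in Ch(C), either Ch(C \ {c}) = Ch(C) \ {c}, or Ch(C \ {c}) = (Ch(C) \ {c}) ∪ {d} for some single candidate d in C not in Ch(C). -/
open PMA
section Aux

variable {α : Type*} [DecidableEq α]

lemma pass2_append (maxQ : List (Pop α)) (M1 M2 : List α) (S : Finset α) :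
    pass2 maxQ (M1 ++ M2) S = pass2 maxQ M2 (pass2 maxQ M1 S) := by
  induction M1 generalizing S with
  | nil => rfl
  | cons e M ih =>
    simp only [List.cons_append, pass2]
    split <;> exact ih _

lemma pass2_subset_union (maxQ : List (Pop α)) (M : List α) (S : Finset α) :
    pass2 maxQ M S ⊆ S ∪ M.toFinset := by
  induction M generalizing S with
  | nil => simp [pass2]
  | cons e M ih =>
    simp only [pass2]
    split
    · refine (ih _).trans ?_
      intro x hx
      simp only [Finset.mem_union, Finset.mem_insert, List.toFinset_cons,
        List.mem_toFinset] at hx ⊢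
      tauto
    · refine (ih _).trans ?_
      intro x hx
      simp only [Finset.mem_union, List.toFinset_cons, Finset.mem_insert,
        List.mem_toFinset] at hx ⊢
      tauto

lemma Feasible_mono (maxQ : List (Pop α)) {S T : Finset α} (h : S ⊆ T)
    (hT : Feasible maxQ T) : Feasible maxQ S := fun q hq =>
  le_trans (Finset.card_le_card (Finset.inter_subset_inter h (subset_refl _))) (hT q hq)

lemma phase2 (maxQ : List (Pop α)) (hlam : Laminar maxQ)
    (q : Pop α) (hq : q ∈ maxQ) (c d : α) (hcq : c ∈ q.1) (hdq : d ∈ q.1) (hcd : c ≠ d) :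
    ∀ (M : List α) (U : Finset α), c ∉ U → d ∉ U →
    (∀ e ∈ M, e ∉ U ∧ e ≠ c ∧ e ≠ d) → M.Nodup →
    Feasible maxQ (insert c U) → Feasible maxQ (insert d U) →
    (U ∩ q.1).card + 1 = q.2 →
    ∃ V, c ∉ V ∧ d ∉ V ∧
      pass2 maxQ M (insert c U) = insert c V ∧
      pass2 maxQ M (insert d U) = insert d V := by
  intro M
  induction M with
  | nil =>
    intro U hc hd _ _ _ _ _
    exact ⟨U, hc, hd, rfl, rfl⟩
  | cons e M ih =>
    intro U hcU hdU hM hnd hFc hFd htight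
    obtain ⟨heU, hec, hed⟩ := hM e (List.mem_cons_self)
    have hM' : ∀ f ∈ M, f ∉ U ∧ f ≠ c ∧ f ≠ d := fun f hf => hM f (List.mem_cons_of_mem _ hf)
    have hnd' : M.Nodup := hnd.of_cons
    by_cases heq : e ∈ q.1
    · -- e shares the tight quota q with both c and d: both runs reject e
      have hrej : ∀ x : α, x ∈ q.1 → x ∉ U → e ≠ x →
          ¬ Feasible maxQ (insert e (insert x U)) := by
        intro x hxq hxU hex hF
        have h1 := hF q hq
        have hx' : x ∉ U ∩ q.1 := fun h => hxU (Finset.mem_of_mem_inter_left h)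
        have he' : e ∉ insert x (U ∩ q.1) := by
          simp only [Finset.mem_insert, Finset.mem_inter]
          push_neg
          exact ⟨hex, fun h _ => heU h⟩
        rw [Finset.insert_inter_of_mem heq, Finset.insert_inter_of_mem hxq,
          Finset.card_insert_of_notMem he', Finset.card_insert_of_notMem hx'] at h1
        omega
      have h1 : ¬ Feasible maxQ (insert e (insert c U)) := hrej c hcq hcU hec
      have h2 : ¬ Feasible maxQ (insert e (insert d U)) := hrej d hdq hdU hed
      simp only [pass2, if_neg h1, if_neg h2]
      exact ih U hcU hdU hM' hnd' hFc hFd htight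
    · -- e is outside q: both runs make the same decision
      have key : ∀ x y : α, x ∈ q.1 → y ∈ q.1 → x ∉ U → y ∉ U → e ≠ x → e ≠ y →
          Feasible maxQ (insert y U) →
          Feasible maxQ (insert e (insert x U)) →
          Feasible maxQ (insert e (insert y U)) := by
        intro x y hxq hyq hxU hyU hex hey hFy hF p hp
        rcases hlam p hp q hq with hdis | hpq | hqp
        · have hxp : x ∉ p.1 := fun h => (Finset.disjoint_left.mp hdis h) hxq
          have hyp : y ∉ p.1 := fun h => (Finset.disjoint_left.mp hdis h) hyq
          have h1 := hF p hp
          rw [Finset.insert_comm, Finset.insert_inter_of_notMem hxp] at h1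
          rw [Finset.insert_comm, Finset.insert_inter_of_notMem hyp]
          exact h1
        · have hep : e ∉ p.1 := fun h => heq (hpq h)
          rw [Finset.insert_inter_of_notMem hep]
          exact hFy p hp
        · have h1 := hF p hp
          have hx' : x ∉ insert e U ∩ p.1 := fun h => by
            rcases Finset.mem_insert.mp (Finset.mem_of_mem_inter_left h) with h' | h'
            · exact hex h'.symm
            · exact hxU h'
          have hy' : y ∉ insert e U ∩ p.1 := fun h => by
            rcases Finset.mem_insert.mp (Finset.mem_of_mem_inter_left h) with h' | h'
            · exact hey h'.symm
            · exact hyU h'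
          rw [Finset.insert_comm, Finset.insert_inter_of_mem (hqp hxq),
            Finset.card_insert_of_notMem hx'] at h1
          rw [Finset.insert_comm, Finset.insert_inter_of_mem (hqp hyq),
            Finset.card_insert_of_notMem hy']
          omega
      by_cases hF : Feasible maxQ (insert e (insert c U))
      · have hF' : Feasible maxQ (insert e (insert d U)) :=
          key c d hcq hdq hcU hdU hec hed hFd hF
        simp only [pass2, if_pos hF, if_pos hF']
        rw [Finset.insert_comm e c, Finset.insert_comm e d]
        refine ih (insert e U) ?_ ?_ ?_ hnd' ?_ ?_ ?_
        · simp only [Finset.mem_insert]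
          push_neg
          exact ⟨fun h => hec h.symm, hcU⟩
        · simp only [Finset.mem_insert]
          push_neg
          exact ⟨fun h => hed h.symm, hdU⟩
        · intro f hf
          obtain ⟨h1, h2, h3⟩ := hM' f hf
          have hfe : f ≠ e := fun h => (List.nodup_cons.mp hnd).1 (h ▸ hf)
          refine ⟨?_, h2, h3⟩
          simp only [Finset.mem_insert]
          push_neg
          exact ⟨hfe, h1⟩
        · rwa [Finset.insert_comm]
        · rwa [Finset.insert_comm]
        · rwa [Finset.insert_inter_of_notMem heq]
      · have hF' : ¬ Feasible maxQ (insert e (insert d U)) := fun h =>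
          hF (key d c hdq hcq hdU hcU hed hec hFc h)
        simp only [pass2, if_neg hF, if_neg hF']
        exact ih U hcU hdU hM' hnd' hFc hFd htight

lemma phase1 (maxQ : List (Pop α)) (hlam : Laminar maxQ) (c : α) :
    ∀ (M : List α) (S : Finset α), c ∉ S → c ∉ M → (∀ e ∈ M, e ∉ S ∧ e ≠ c) → M.Nodup →
    Feasible maxQ (insert c S) →
    pass2 maxQ M S = (pass2 maxQ M (insert c S)).erase c
    ∨ ∃ d ∈ M, d ∉ pass2 maxQ M (insert c S) ∧
       pass2 maxQ M S = insert d ((pass2 maxQ M (insert c S)).erase c) := by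
  intro M
  induction M with
  | nil =>
    intro S hcS _ _ _ _
    left
    simp [pass2, Finset.erase_insert hcS]
  | cons e M ih =>
    intro S hcS hcM hM hnd hFc
    have hec : e ≠ c := fun h => hcM (h ▸ List.mem_cons_self)
    have heS : e ∉ S := (hM e (List.mem_cons_self)).1
    have hcM' : c ∉ M := fun h => hcM (List.mem_cons_of_mem _ h)
    have hM' : ∀ f ∈ M, f ∉ S ∧ f ≠ c := fun f hf => hM f (List.mem_cons_of_mem _ hf)
    have hnd' : M.Nodup := hnd.of_cons
    by_cases hF : Feasible maxQ (insert e (insert c S))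
    · -- both accept e
      have hF2 : Feasible maxQ (insert e S) :=
        Feasible_mono maxQ (Finset.insert_subset_insert _ (Finset.subset_insert _ _)) hF
      simp only [pass2, if_pos hF, if_pos hF2]
      rw [Finset.insert_comm e c]
      have hrec := ih (insert e S)
        (by simp only [Finset.mem_insert]; push_neg; exact ⟨fun h => hec h.symm, hcS⟩)
        hcM'
        (by
          intro f hf
          obtain ⟨h1, h2⟩ := hM' f hf
          have hfe : f ≠ e := fun h => (List.nodup_cons.mp hnd).1 (h ▸ hf)
          refine ⟨?_, h2⟩
          simp only [Finset.mem_insert]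
          push_neg
          exact ⟨hfe, h1⟩)
        hnd' (by rwa [Finset.insert_comm])
      rcases hrec with hL | ⟨d, hdM, hdn, heqd⟩
      · exact Or.inl hL
      · exact Or.inr ⟨d, List.mem_cons_of_mem _ hdM, hdn, heqd⟩
    · by_cases hF2 : Feasible maxQ (insert e S)
      · -- divergence: the run without c accepts e, the run with c rejects e
        have hFsave := hF
        unfold Feasible at hF
        push_neg at hF
        obtain ⟨q, hq, hcard⟩ := hF
        have hcq1 : c ∈ q.1 := by
          by_contra hc'
          have h1 := hF2 q hq
          rw [Finset.insert_comm, Finset.insert_inter_of_notMem hc'] at hcard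
          omega
        have heq1 : e ∈ q.1 := by
          by_contra he'
          have h1 := hFc q hq
          rw [Finset.insert_inter_of_notMem he'] at hcard
          omega
        have hcsq : c ∉ S ∩ q.1 := fun h => hcS (Finset.mem_of_mem_inter_left h)
        have hesq : e ∉ insert c (S ∩ q.1) := by
          simp only [Finset.mem_insert, Finset.mem_inter]
          push_neg
          exact ⟨hec, fun h _ => heS h⟩
        have htight : (S ∩ q.1).card + 1 = q.2 := by
          have h1 := hF2 q hq
          rw [Finset.insert_inter_of_mem heq1,
            Finset.card_insert_of_notMem (fun h => heS (Finset.mem_of_mem_inter_left h))] at h1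
          rw [Finset.insert_inter_of_mem heq1, Finset.insert_inter_of_mem hcq1,
            Finset.card_insert_of_notMem hesq, Finset.card_insert_of_notMem hcsq] at hcard
          omega
        obtain ⟨V, hcV, heV, hV1, hV2⟩ :=
          phase2 maxQ hlam q hq c e hcq1 heq1 (fun h => hec h.symm) M S hcS heS
            (fun f hf => ⟨(hM' f hf).1, (hM' f hf).2,
              fun h => (List.nodup_cons.mp hnd).1 (h ▸ hf)⟩)
            hnd' hFc hF2 htight
        right
        refine ⟨e, List.mem_cons_self, ?_, ?_⟩
        · simp only [pass2, if_neg hFsave, hV1, Finset.mem_insert]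
          push_neg
          exact ⟨hec, heV⟩
        · simp only [pass2, if_neg hFsave, if_pos hF2, hV1, hV2,
            Finset.erase_insert hcV]
      · simp only [pass2, if_neg hF, if_neg hF2]
        rcases ih S hcS hcM' hM' hnd' hFc with hL | ⟨d, hdM, hdn, heqd⟩
        · exact Or.inl hL
        · exact Or.inr ⟨d, List.mem_cons_of_mem _ hdM, hdn, heqd⟩

end Aux


/-- For laminar populations with maximum quotas only: if `c ∈ Ch(C)` then
`Ch(C \ {c})` equals `Ch(C) \ {c}`, or `(Ch(C) \ {c}) ∪ {d}` for a single candidate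
`d ∈ C` not chosen from `C`. -/
theorem greedy_remove_chosen {α : Type*} [DecidableEq α] [LinearOrder α]
    (maxQ : List (Pop α)) (hlam : Laminar maxQ)
    (C : Finset α) (c : α) (hcC : c ∈ C) (hc : c ∈ greedy maxQ C) :
    greedy maxQ (C.erase c) = (greedy maxQ C).erase c ∨
      ∃ d ∈ C, d ∉ greedy maxQ C ∧
        greedy maxQ (C.erase c) = insert d ((greedy maxQ C).erase c) := by
  classical
  have hcL : c ∈ C.sort (· ≤ ·) := (Finset.mem_sort _).mpr hcC
  obtain ⟨L1, L2, hL⟩ := List.append_of_mem hcL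
  have hndL : (L1 ++ c :: L2).Nodup := by
    rw [← hL]; exact C.sort_nodup (· ≤ ·)
  rw [List.nodup_append] at hndL
  obtain ⟨hnd1, hnd2, hdisj⟩ := hndL
  have hcL2 : c ∉ L2 := (List.nodup_cons.mp hnd2).1
  have hndL2 : L2.Nodup := (List.nodup_cons.mp hnd2).2
  have hcL1 : c ∉ L1 := fun h => hdisj c h c List.mem_cons_self rfl
  -- the sorted list of C.erase c
  have hsort : (C.erase c).sort (· ≤ ·) = L1 ++ L2 := by
    refine (fun hp hs => List.Perm.eq_of_pairwise' ((C.erase c).pairwise_sort (· ≤ ·)) hs hp) ?_ ?_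
    · apply Multiset.coe_eq_coe.mp
      have h1 : ((C.erase c).sort (· ≤ ·) : Multiset α) = (C.erase c).val :=
        Finset.sort_eq _ _
      have h2 : (C.erase c).val = C.val.erase c := Finset.erase_val _ _
      have h3 : (C.val : Multiset α) = ↑(L1 ++ c :: L2) := by
        rw [← hL]; exact (Finset.sort_eq _ _).symm
      have h4 : (↑(L1 ++ c :: L2) : Multiset α) = c ::ₘ ↑(L1 ++ L2) := by
        exact Multiset.coe_eq_coe.mpr List.perm_middle
      rw [h1, h2, h3, h4, Multiset.erase_cons_head]
    · have hs := C.pairwise_sort (· ≤ ·)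
      rw [hL] at hs
      exact List.Pairwise.sublist ((List.sublist_cons_self c L2).append_left L1) hs
  set S0 := pass2 maxQ L1 ∅ with hS0
  have hS0sub : S0 ⊆ (∅ : Finset α) ∪ L1.toFinset := pass2_subset_union maxQ L1 ∅
  have hmemS0 : ∀ x, x ∈ S0 → x ∈ L1 := by
    intro x hx
    have := hS0sub hx
    simpa using this
  have hcS0 : c ∉ S0 := fun h => hcL1 (hmemS0 c h)
  have hgC : greedy maxQ C = pass2 maxQ (c :: L2) S0 := by
    rw [greedy, hL, pass2_append]
  have hL2cond : ∀ e ∈ L2, e ∉ S0 ∧ e ≠ c := by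
    intro e he
    constructor
    · intro hS
      exact hdisj e (hmemS0 e hS) e (List.mem_cons_of_mem _ he) rfl
    · intro h
      exact hcL2 (h ▸ he)
  by_cases hFc0 : Feasible maxQ (insert c S0)
  · have hgC2 : greedy maxQ C = pass2 maxQ L2 (insert c S0) := by
      rw [hgC]; simp only [pass2, if_pos hFc0]
    have hgE : greedy maxQ (C.erase c) = pass2 maxQ L2 S0 := by
      rw [greedy, hsort, pass2_append]
    rcases phase1 maxQ hlam c L2 S0 hcS0 hcL2 hL2cond hndL2 hFc0 with h | ⟨d, hdM, hdn, heq⟩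
    · left
      rw [hgC2, hgE]
      exact h
    · right
      refine ⟨d, ?_, ?_, ?_⟩
      · have : d ∈ C.sort (· ≤ ·) := by
          rw [hL]
          exact List.mem_append_right _ (List.mem_cons_of_mem _ hdM)
        exact (Finset.mem_sort _).mp this
      · rw [hgC2]; exact hdn
      · rw [hgC2, hgE]; exact heq
  · exfalso
    have h1 : greedy maxQ C = pass2 maxQ L2 S0 := by
      rw [hgC]; simp only [pass2, if_neg hFc0]
    have h2 := pass2_subset_union maxQ L2 S0
    rw [h1] at hc
    have := h2 hc
    simp only [Finset.mem_union, List.mem_toFinset] at this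
    rcases this with h | h
    · exact hcL1 (hmemS0 c h)
    · exact hcL2 h
end

section
/- In a two-sided matching market where each institution's choice function is substitutable, satisfies irrelevance of rejected contracts, and satisfies the law of aggregate demand, and each candidate has a strict preference list over a subset of institutions, the candidate-proposing deferred acceptance algorithm terminates and produces a stable matching. -/
open PMA

namespace DAProof

variable {α β : Type*} [DecidableEq α] [DecidableEq β]

lemma find?_indexOf_le {p : β → Bool} :
    ∀ {l : List β} {a b : β}, l.find? p = some a → b ∈ l → p b = true →
      l.idxOf a ≤ l.idxOf b := by
  intro l
  induction l with
  | nil => intro a b h; simp at h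
  | cons x xs ih =>
    intro a b h hb hpb
    by_cases hpx : p x = true
    · rw [List.find?_cons_of_pos hpx] at h
      injection h with h; subst h
      simp [List.idxOf_cons_self]
    · rw [List.find?_cons_of_neg (by simpa using hpx)] at h
      have hbx : x ≠ b := fun e => hpx (e ▸ hpb)
      have hax : x ≠ a := by
        intro e; subst e
        exact hpx (List.find?_some h)
      rw [List.idxOf_cons_ne _ hax, List.idxOf_cons_ne _ hbx]
      have hb' : b ∈ xs := by
        rcases hb with _ | h'
        · exact absurd rfl hbx
        · assumption
      exact Nat.succ_le_succ (ih h hb' hpb)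

variable {Ch : Finset α → Finset α}

lemma consistAux (hchoice : ∀ C, Ch C ⊆ C)
    (hirc : ∀ (C : Finset α) c, c ∈ C → c ∉ Ch C → Ch (C.erase c) = Ch C) :
    ∀ (n : ℕ) (D E : Finset α), (E \ D).card ≤ n → Ch E ⊆ D → D ⊆ E → Ch D = Ch E := by
  intro n
  induction n with
  | zero =>
    intro D E hcard h1 h2
    have : E \ D = ∅ := Finset.card_eq_zero.mp (Nat.le_zero.mp hcard)
    have hED : E ⊆ D := by
      intro x hx
      by_contra hxD
      exact absurd (Finset.mem_sdiff.mpr ⟨hx, hxD⟩) (by simp [this])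
    rw [Finset.Subset.antisymm h2 hED]
  | succ n ih =>
    intro D E hcard h1 h2
    rcases Finset.eq_empty_or_nonempty (E \ D) with he | ⟨c, hc⟩
    · have hED : E ⊆ D := by
        intro x hx
        by_contra hxD
        exact absurd (Finset.mem_sdiff.mpr ⟨hx, hxD⟩) (by simp [he])
      rw [Finset.Subset.antisymm h2 hED]
    · obtain ⟨hcE, hcD⟩ := Finset.mem_sdiff.mp hc
      have hcCh : c ∉ Ch E := fun h => hcD (h1 h)
      have heq : Ch (E.erase c) = Ch E := hirc E c hcE hcCh
      have hstep : Ch D = Ch (E.erase c) := by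
        apply ih D (E.erase c)
        · rw [Finset.erase_sdiff_comm]
          rw [Finset.card_erase_of_mem hc] at *
          omega
        · rw [heq]; exact h1
        · intro x hx
          exact Finset.mem_erase.mpr ⟨fun e => hcD (e ▸ hx), h2 hx⟩
      rw [hstep, heq]

lemma subMonoAux (hsub : ∀ (C : Finset α) c c', c ∈ Ch C → c ≠ c' → c ∈ Ch (C.erase c')) :
    ∀ (n : ℕ) (D E : Finset α) (c : α), (E \ D).card ≤ n → D ⊆ E → c ∈ D → c ∈ Ch E →
      c ∈ Ch D := by
  intro n
  induction n with
  | zero =>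
    intro D E c hcard h2 hcD hcCh
    have : E \ D = ∅ := Finset.card_eq_zero.mp (Nat.le_zero.mp hcard)
    have hED : E ⊆ D := by
      intro x hx
      by_contra hxD
      exact absurd (Finset.mem_sdiff.mpr ⟨hx, hxD⟩) (by simp [this])
    rwa [Finset.Subset.antisymm h2 hED]
  | succ n ih =>
    intro D E c hcard h2 hcD hcCh
    rcases Finset.eq_empty_or_nonempty (E \ D) with he | ⟨c', hc'⟩
    · have hED : E ⊆ D := by
        intro x hx
        by_contra hxD
        exact absurd (Finset.mem_sdiff.mpr ⟨hx, hxD⟩) (by simp [he])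
      rwa [Finset.Subset.antisymm h2 hED]
    · obtain ⟨hc'E, hc'D⟩ := Finset.mem_sdiff.mp hc'
      have hne : c ≠ c' := fun e => hc'D (e ▸ hcD)
      apply ih D (E.erase c') c
      · rw [Finset.erase_sdiff_comm]
        rw [Finset.card_erase_of_mem hc'] at *
        omega
      · intro x hx
        exact Finset.mem_erase.mpr ⟨fun e => hc'D (e ▸ hx), h2 hx⟩
      · exact hcD
      · exact hsub E c c' hcCh hne

lemma iterate_fixed_of_measure {γ : Type*} (f : γ → γ) (μ : γ → ℕ) (N : ℕ) (x : γ)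
    (hb : ∀ n, μ (f^[n] x) ≤ N)
    (hs : ∀ y, f y ≠ y → μ y < μ (f y)) :
    f (f^[N+1] x) = f^[N+1] x := by
  have key : ∀ n, f (f^[n] x) = f^[n] x ∨ n ≤ μ (f^[n] x) := by
    intro n
    induction n with
    | zero => right; exact Nat.zero_le _
    | succ n ih =>
      rcases ih with h | h
      · left; rw [Function.iterate_succ_apply', h, h]
      · by_cases hf : f (f^[n] x) = f^[n] x
        · left; rw [Function.iterate_succ_apply', hf, hf]
        · right
          rw [Function.iterate_succ_apply']
          exact lt_of_le_of_lt h (hs _ hf)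
  rcases key (N+1) with h | h
  · exact h
  · exact absurd (le_trans h (hb (N+1))) (by omega)

end DAProof

/-- If every institution's choice function is substitutable and satisfies
irrelevance of rejected contracts and the law of aggregate demand, then candidate-proposing
deferred acceptance terminates (reaches a fixed point) and produces a stable matching. -/
theorem da_terminates_and_stable {α β : Type*} [Fintype α] [DecidableEq α]
    [Fintype β] [DecidableEq β]
    (Ch : β → Finset α → Finset α) (prefs : α → List β)
    (hchoice : ∀ m (C : Finset α), Ch m C ⊆ C)
    (hnodup : ∀ c, (prefs c).Nodup)
    (hsub : ∀ m (C : Finset α) (c c' : α), c ∈ Ch m C → c ≠ c' → c ∈ Ch m (C.erase c'))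
    (hirc : ∀ m (C : Finset α) (c : α), c ∈ C → c ∉ Ch m C → Ch m (C.erase c) = Ch m C)
    (hlad : ∀ m (C : Finset α) (c : α), c ∈ C → (Ch m (C.erase c)).card ≤ (Ch m C).card) :
    daRound Ch prefs (daRej Ch prefs) = daRej Ch prefs ∧
      StableMatching Ch prefs (daMatch Ch prefs) := by
  classical
  -- basic facts about applyTo
  have applyTo_not_rej : ∀ (rej : α → Finset β) c m,
      applyTo prefs rej c = some m → m ∉ rej c := by
    intro rej c m h
    have := List.find?_some h
    simpa using this
  have applyTo_mem_prefs : ∀ (rej : α → Finset β) c m,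
      applyTo prefs rej c = some m → m ∈ prefs c := by
    intro rej c m h
    exact List.mem_of_find?_eq_some h
  have mem_applicants : ∀ (rej : α → Finset β) m c,
      c ∈ applicants prefs rej m ↔ applyTo prefs rej c = some m := by
    intro rej m c; simp [applicants]
  have applyTo_congr : ∀ (rej rej' : α → Finset β) c, rej' c = rej c →
      applyTo prefs rej' c = applyTo prefs rej c := by
    intro rej rej' c h
    simp only [applyTo, h]
  -- choice-function lemmas
  have consist : ∀ m (D E : Finset α), Ch m E ⊆ D → D ⊆ E → Ch m D = Ch m E := by
    intro m D E h1 h2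
    exact DAProof.consistAux (hchoice m) (hirc m) (E \ D).card D E le_rfl h1 h2
  have smono : ∀ m (D E : Finset α) c, D ⊆ E → c ∈ D → c ∈ Ch m E → c ∈ Ch m D := by
    intro m D E c h1 h2 h3
    exact DAProof.subMonoAux (hsub m) (E \ D).card D E c le_rfl h1 h2 h3
  have L3 : ∀ m (H A' : Finset α) c, c ∉ Ch m (insert c H) → H ⊆ A' →
      c ∉ Ch m (insert c A') := by
    intro m H A' c h hHA hc
    exact h (smono m _ _ c (Finset.insert_subset_insert _ hHA)
      (Finset.mem_insert_self _ _) hc)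
  have L1 : ∀ m (A : Finset α) c, c ∉ A → c ∉ Ch m (insert c A) →
      c ∉ Ch m (insert c (Ch m A)) := by
    intro m A c hcA hc
    have hsubset : Ch m (insert c A) ⊆ insert c (Ch m A) := by
      intro d hd
      rcases eq_or_ne d c with rfl | hdc
      · exact absurd hd hc
      · have h' := hsub m (insert c A) d c hd hdc
        rw [Finset.erase_insert hcA] at h'
        exact Finset.mem_insert_of_mem h'
    have heq := consist m (insert c (Ch m A)) (insert c A) hsubset
      (Finset.insert_subset_insert _ (hchoice m A))
    rw [heq]; exact hc
  have L2 : ∀ m (A : Finset α) c, c ∈ A → c ∉ Ch m A →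
      c ∉ Ch m (insert c (Ch m A)) := by
    intro m A c hcA hc
    have h1 : Ch m A ⊆ insert c (Ch m A) := Finset.subset_insert _ _
    have h2 : insert c (Ch m A) ⊆ A := Finset.insert_subset hcA (hchoice m A)
    rw [consist m _ A h1 h2]; exact hc
  -- step facts about daRound
  have step_accept : ∀ (rej : α → Finset β) c m, applyTo prefs rej c = some m →
      c ∈ Ch m (applicants prefs rej m) → daRound Ch prefs rej c = rej c := by
    intro rej c m h hc
    simp [daRound, h, hc]
  have step_reject : ∀ (rej : α → Finset β) c m, applyTo prefs rej c = some m →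
      c ∉ Ch m (applicants prefs rej m) →
      daRound Ch prefs rej c = insert m (rej c) := by
    intro rej c m h hc
    simp [daRound, h, hc]
  have step_none : ∀ (rej : α → Finset β) c, applyTo prefs rej c = none →
      daRound Ch prefs rej c = rej c := by
    intro rej c h
    simp [daRound, h]
  have mono : ∀ (rej : α → Finset β) c, rej c ⊆ daRound Ch prefs rej c := by
    intro rej c
    rcases h : applyTo prefs rej c with _ | m
    · rw [step_none rej c h]
    · by_cases hc : c ∈ Ch m (applicants prefs rej m)
      · rw [step_accept rej c m h hc]
      · rw [step_reject rej c m h hc]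
        exact Finset.subset_insert _ _
  -- held candidates keep applying
  have held_sub : ∀ (rej : α → Finset β) m,
      Ch m (applicants prefs rej m) ⊆ applicants prefs (daRound Ch prefs rej) m := by
    intro rej m d hd
    have hdA : d ∈ applicants prefs rej m := hchoice m _ hd
    have happ : applyTo prefs rej d = some m := (mem_applicants rej m d).mp hdA
    have hfix : daRound Ch prefs rej d = rej d := step_accept rej d m happ hd
    rw [mem_applicants, applyTo_congr rej _ d hfix]
    exact happ
  -- the invariant: rejected candidates cannot block
  have Inv : ∀ n : ℕ, ∀ m c,
      m ∈ ((daRound Ch prefs)^[n] (fun _ => ∅)) c →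
      c ∉ Ch m (insert c (applicants prefs ((daRound Ch prefs)^[n] (fun _ => ∅)) m)) := by
    intro n
    induction n with
    | zero => simp
    | succ n ih =>
      rw [Function.iterate_succ_apply']
      set rej := (daRound Ch prefs)^[n] (fun _ => ∅) with hrej
      intro m c hm
      have hH := held_sub rej m
      have hcnotA' : c ∉ applicants prefs (daRound Ch prefs rej) m := by
        intro hc
        exact applyTo_not_rej _ c m ((mem_applicants _ m c).mp hc) hm
      by_cases hmr : m ∈ rej c
      · have h1 := ih m c hmr
        have hcA : c ∉ applicants prefs rej m := by
          intro hc
          exact applyTo_not_rej rej c m ((mem_applicants rej m c).mp hc) hmr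
        exact L3 m _ _ c (L1 m _ c hcA h1) hH
      · -- c was newly rejected from m this round
        rcases happ : applyTo prefs rej c with _ | m''
        · rw [step_none rej c happ] at hm
          exact absurd hm hmr
        · by_cases hc : c ∈ Ch m'' (applicants prefs rej m'')
          · rw [step_accept rej c m'' happ hc] at hm
            exact absurd hm hmr
          · rw [step_reject rej c m'' happ hc] at hm
            rcases Finset.mem_insert.mp hm with rfl | hm'
            · have hcA : c ∈ applicants prefs rej m := (mem_applicants rej m c).mpr happ
              exact L3 m _ _ c (L2 m _ c hcA hc) hH
            · exact absurd hm' hmr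
  -- termination
  have fixed : daRound Ch prefs (daRej Ch prefs) = daRej Ch prefs := by
    have hb : ∀ n, (∑ c : α, (((daRound Ch prefs)^[n] (fun _ => ∅)) c).card) ≤
        Fintype.card α * Fintype.card β := by
      intro n
      calc (∑ c : α, (((daRound Ch prefs)^[n] (fun _ => ∅)) c).card)
          ≤ ∑ _c : α, Fintype.card β :=
            Finset.sum_le_sum fun c _ => Finset.card_le_univ _
        _ = Fintype.card α * Fintype.card β := by
            simp [Finset.sum_const, Finset.card_univ]
    have hs : ∀ y : α → Finset β, daRound Ch prefs y ≠ y →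
        (∑ c : α, (y c).card) < ∑ c : α, ((daRound Ch prefs y) c).card := by
      intro y hy
      obtain ⟨c0, hc0⟩ := Function.ne_iff.mp hy
      apply Finset.sum_lt_sum
      · intro i _
        exact Finset.card_le_card (mono y i)
      · exact ⟨c0, Finset.mem_univ c0,
          Finset.card_lt_card (Finset.ssubset_iff_subset_ne.mpr ⟨mono y c0, (Ne.symm hc0)⟩)⟩
    exact DAProof.iterate_fixed_of_measure (daRound Ch prefs)
      (fun rej => ∑ c : α, (rej c).card) (Fintype.card α * Fintype.card β)
      (fun _ => ∅) hb hs
  refine ⟨fixed, ?_, ?_⟩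
  · -- individual rationality
    constructor
    · intro c m hM
      exact applyTo_mem_prefs _ c m hM
    · intro m
      have hassign : assignedTo (daMatch Ch prefs) m = applicants prefs (daRej Ch prefs) m := rfl
      rw [hassign]
      apply Finset.Subset.antisymm (hchoice m _)
      intro c hc
      have happ : applyTo prefs (daRej Ch prefs) c = some m :=
        (mem_applicants _ m c).mp hc
      by_contra hnc
      have := step_reject (daRej Ch prefs) c m happ hnc
      rw [fixed] at this
      exact applyTo_not_rej _ c m happ (this ▸ Finset.mem_insert_self m _)
  · -- no blocking pairs
    intro c m hblock
    obtain ⟨hpref, hchosen⟩ := hblock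
    have hassign : assignedTo (daMatch Ch prefs) m = applicants prefs (daRej Ch prefs) m := rfl
    rw [hassign] at hchosen
    have hmr : m ∈ daRej Ch prefs c := by
      rcases hM : daMatch Ch prefs c with _ | m'
      · rw [hM] at hpref
        have hnone : applyTo prefs (daRej Ch prefs) c = none := hM
        have := List.find?_eq_none.mp hnone m hpref
        simpa using this
      · rw [hM] at hpref
        obtain ⟨hmem, hlt⟩ := hpref
        by_contra hmr
        have hle := DAProof.find?_indexOf_le (p := fun x => decide (x ∉ daRej Ch prefs c))
          hM hmem (by simpa using hmr)
        omega
    have := Inv (Fintype.card α * Fintype.card β + 1) m c hmr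
    exact this hchosen
end

section
/- Truncation safety of candidate-proposing DA: for any profile of candidate preferences and any institution choice functions (arbitrary functions Ch: candidate sets → subsets with Ch(C) ⊆ C), if a candidate, submitting a truncation of her preference list (removing some institutions from the end), is assigned by DA to a certain institution, then submitting her full non-truncated list results in the same assignment for her. -/
open PMA

section Aux

variable {α β : Type*} [Fintype α] [DecidableEq α] [Fintype β] [DecidableEq β]

lemma subset_daRound (Ch : β → Finset α → Finset α) (prefs : α → List β)
    (rej : α → Finset β) (c : α) : rej c ⊆ daRound Ch prefs rej c := by
  unfold daRound
  rcases h : applyTo prefs rej c with _ | m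
  · exact subset_rfl
  · dsimp only
    split
    · exact subset_rfl
    · exact Finset.subset_insert _ _

lemma rej_mono (Ch : β → Finset α → Finset α) (prefs : α → List β) {k l : ℕ}
    (h : k ≤ l) (c : α) :
    (daRound Ch prefs)^[k] (fun _ => ∅) c ⊆ (daRound Ch prefs)^[l] (fun _ => ∅) c := by
  induction l with
  | zero => simp only [Nat.le_zero] at h; subst h; exact subset_rfl
  | succ l ih =>
    rcases Nat.lt_or_ge k (l + 1) with h' | h'
    · refine (ih (Nat.lt_succ_iff.mp h')).trans ?_
      rw [Function.iterate_succ_apply']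
      exact subset_daRound Ch prefs _ c
    · have : k = l + 1 := le_antisymm h h'
      subst this; exact subset_rfl

lemma applyTo_trunc (prefs : α → List β) (c₀ : α) (t : ℕ) (rej : α → Finset β) (m : β)
    (hm : m ∈ (prefs c₀).take t) (hr : m ∉ rej c₀) (c : α) :
    applyTo prefs rej c = applyTo (Function.update prefs c₀ ((prefs c₀).take t)) rej c := by
  by_cases hc : c = c₀
  · subst hc
    unfold applyTo
    rw [Function.update_self]
    obtain ⟨x, hx⟩ : ∃ x, ((prefs c).take t).find? (fun b => decide (b ∉ rej c)) = some x := by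
      rw [← Option.isSome_iff_exists, List.find?_isSome]
      exact ⟨m, hm, by simpa using hr⟩
    rw [hx]
    conv_lhs => rw [← List.take_append_drop t (prefs c)]
    rw [List.find?_append, hx]
    rfl
  · unfold applyTo; rw [Function.update_of_ne hc]

lemma daRound_congr (Ch : β → Finset α → Finset α) (prefs prefs' : α → List β)
    (rej : α → Finset β) (h : ∀ c, applyTo prefs rej c = applyTo prefs' rej c) :
    daRound Ch prefs rej = daRound Ch prefs' rej := by
  have happ : applicants prefs rej = applicants prefs' rej := by
    funext mm
    unfold applicants
    apply Finset.filter_congr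
    intro c _
    rw [h c]
  funext c
  unfold daRound
  rw [h c, happ]

end Aux

/-- Truncation safety of candidate-proposing DA: for arbitrary institution
choice functions (satisfying only `Ch(C) ⊆ C`), if a candidate submitting a truncation of
her preference list is assigned to some institution, then submitting her full list results
in the same assignment for her. -/
theorem da_truncation_safe {α β : Type*} [Fintype α] [DecidableEq α]
    [Fintype β] [DecidableEq β]
    (Ch : β → Finset α → Finset α) (hchoice : ∀ m (C : Finset α), Ch m C ⊆ C)
    (prefs : α → List β) (c₀ : α) (t : ℕ) (m : β)
    (htrunc : daMatch Ch (Function.update prefs c₀ ((prefs c₀).take t)) c₀ = some m) :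
    daMatch Ch prefs c₀ = some m := by
  set prefs' := Function.update prefs c₀ ((prefs c₀).take t) with hp
  set N := Fintype.card α * Fintype.card β + 1 with hN
  have hfin : applyTo prefs' (daRej Ch prefs') c₀ = some m := htrunc
  have hmem : m ∈ (prefs c₀).take t := by
    have := List.mem_of_find?_eq_some hfin
    simpa [prefs'] using this
  have hnotfin : m ∉ daRej Ch prefs' c₀ := by
    have := List.find?_some hfin
    simpa using this
  have hrejN : daRej Ch prefs' = (daRound Ch prefs')^[N] (fun _ => ∅) := rfl
  have hmnot : ∀ k ≤ N, m ∉ (daRound Ch prefs')^[k] (fun _ => ∅) c₀ := by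
    intro k hk hmemk
    exact hnotfin (by rw [hrejN] at *; exact rej_mono Ch prefs' hk c₀ hmemk)
  have key : ∀ k, k ≤ N → (daRound Ch prefs)^[k] (fun _ => ∅) =
      (daRound Ch prefs')^[k] (fun _ => ∅) := by
    intro k
    induction k with
    | zero => intro _; rfl
    | succ k ih =>
      intro hk
      have hk' : k ≤ N := Nat.le_of_succ_le hk
      rw [Function.iterate_succ_apply', Function.iterate_succ_apply', ih hk']
      exact daRound_congr Ch prefs prefs' _
        (applyTo_trunc prefs c₀ t _ m hmem (hmnot k hk'))
  have hrej : daRej Ch prefs = daRej Ch prefs' := key N le_rfl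
  show applyTo prefs (daRej Ch prefs) c₀ = some m
  rw [hrej, applyTo_trunc prefs c₀ t _ m hmem (by rw [hrejN] at hnotfin ⊢; exact hmnot N le_rfl)]
  exact hfin
end

section
/- Sure-thing safety of candidate-proposing DA: if the choice function of institution m always chooses a given candidate c from any set of candidates containing c, then for any preference list that c submits which contains m, candidate-proposing DA assigns c either to m or to an institution that c ranked above m, regardless of the preference lists of all other candidates. -/
open PMA

private lemma find?_indexOf_le {β : Type*} [DecidableEq β] (p : β → Bool) :
    ∀ (l : List β) (b : β), b ∈ l → p b = true →
      ∃ a, l.find? p = some a ∧ a ∈ l ∧ l.idxOf a ≤ l.idxOf b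
  | [], b, hb, _ => absurd hb List.not_mem_nil
  | x :: t, b, hb, hpb => by
      by_cases hx : p x = true
      · exact ⟨x, by simp [List.find?_cons, hx], List.mem_cons_self,
          by simp [List.idxOf_cons_self]⟩
      · have hbx : b ≠ x := fun h => hx (h ▸ hpb)
        have hbt : b ∈ t := by
          rcases List.mem_cons.mp hb with h | h
          · exact absurd h hbx
          · exact h
        obtain ⟨a, hfind, hmem, hle⟩ := find?_indexOf_le p t b hbt hpb
        have hax : a ≠ x := fun h => hx (h ▸ List.find?_some hfind)
        refine ⟨a, ?_, List.mem_cons_of_mem x hmem, ?_⟩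
        · simp [List.find?_cons, hx, hfind]
        · simp only [List.idxOf_cons, beq_iff_eq, cond_eq_if,
            if_neg (Ne.symm hax), if_neg (Ne.symm hbx)]
          omega

private lemma da_invariant {α β : Type*} [Fintype α] [DecidableEq α]
    [Fintype β] [DecidableEq β]
    (Ch : β → Finset α → Finset α) (prefs : α → List β) (c₀ : α) (m : β)
    (hguar : ∀ C : Finset α, c₀ ∈ C → c₀ ∈ Ch m C) :
    ∀ n, m ∉ ((daRound Ch prefs)^[n] fun _ => ∅) c₀ := by
  intro n
  induction n with
  | zero => simp
  | succ k ih =>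
      rw [Function.iterate_succ_apply']
      set rej := (daRound Ch prefs)^[k] fun _ => ∅ with hrej
      unfold daRound
      cases happ : applyTo prefs rej c₀ with
      | none => exact ih
      | some m' =>
          by_cases hch : c₀ ∈ Ch m' (applicants prefs rej m')
          · simpa [hch] using ih
          · have hmm : m' ≠ m := by
              intro h
              subst h
              exact hch (hguar _ (Finset.mem_filter.mpr ⟨Finset.mem_univ _, happ⟩))
            simp only [hch, if_false, Finset.mem_insert]
            rintro (h | h)
            · exact hmm h.symm
            · exact ih h

/-- Sure-thing safety of candidate-proposing DA: if institution `m` always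
chooses candidate `c₀` from any set containing her, then for any preference list of `c₀`
containing `m` (and any lists of the other candidates), DA assigns `c₀` either to `m` or
to an institution she ranked above `m`. -/
theorem da_sure_thing_safe {α β : Type*} [Fintype α] [DecidableEq α]
    [Fintype β] [DecidableEq β]
    (Ch : β → Finset α → Finset α) (prefs : α → List β) (c₀ : α) (m : β)
    (hguar : ∀ C : Finset α, c₀ ∈ C → c₀ ∈ Ch m C)
    (hm : m ∈ prefs c₀) :
    ∃ m', daMatch Ch prefs c₀ = some m' ∧ m' ∈ prefs c₀ ∧
      (prefs c₀).idxOf m' ≤ (prefs c₀).idxOf m := by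
  have hnin : m ∉ daRej Ch prefs c₀ :=
    da_invariant Ch prefs c₀ m hguar _
  have hp : (fun x => decide (x ∉ daRej Ch prefs c₀)) m = true := by
    simpa using hnin
  obtain ⟨a, hfind, hmem, hle⟩ :=
    find?_indexOf_le (fun x => decide (x ∉ daRej Ch prefs c₀)) (prefs c₀) m hm hp
  exact ⟨a, hfind, hmem, hle⟩
end

section
/- If the populations of a PMA are laminar and the populations with positive minimum targets form a union of pairwise-disjoint chains, then the choice function induced by Algorithm 2 is substitutable: for every candidate set C and every c in C, Ch(C) \ {c} ⊆ Ch(C \ {c}). -/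
open PMA


namespace SubstAux
set_option linter.unusedSectionVars false
set_option maxHeartbeats 1000000

open PMA Finset

variable {α : Type*} [DecidableEq α] [LinearOrder α]

/-- The min-target satisfaction value. -/
def Fval (minT : List (Pop α)) (S : Finset α) : ℕ :=
  (minT.map fun p => min ((S ∩ p.1).card) p.2).sum

/-- Priority weight of a candidate relative to ambient set `C`. -/
def w (C : Finset α) (a : α) : ℕ := 2 ^ (C.filter fun z => a < z).card

def wsum (C S : Finset α) : ℕ := ∑ a ∈ S, w C a

/-- The potential maximized by Algorithm 2. -/
def V (minT : List (Pop α)) (C S : Finset α) : ℕ :=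
  2 ^ C.card * Fval minT S + wsum C S

lemma card_insert_inter (x : α) (X q : Finset α) (hx : x ∉ X) :
    ((insert x X) ∩ q).card = (X ∩ q).card + (if x ∈ q then 1 else 0) := by
  by_cases hq : x ∈ q
  · rw [if_pos hq, Finset.insert_inter_of_mem hq,
      Finset.card_insert_of_notMem (fun h => hx (Finset.mem_inter.mp h).1)]
  · rw [if_neg hq, Finset.insert_inter_of_notMem hq, Nat.add_zero]

lemma card_erase_inter (x : α) (X q : Finset α) (hx : x ∈ X) :
    ((X.erase x) ∩ q).card + (if x ∈ q then 1 else 0) = (X ∩ q).card := by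
  have h : (X.erase x) ∩ q = (X ∩ q).erase x := by
    ext z; simp only [Finset.mem_erase, Finset.mem_inter]; tauto
  rw [h]
  by_cases hq : x ∈ q
  · rw [if_pos hq]; exact Finset.card_erase_add_one (Finset.mem_inter.mpr ⟨hx, hq⟩)
  · rw [if_neg hq, Finset.erase_eq_of_notMem (fun hmem => hq (Finset.mem_inter.mp hmem).2),
      Nat.add_zero]

lemma feasible_mono {maxQ : List (Pop α)} {S T : Finset α} (h : S ⊆ T)
    (hT : Feasible maxQ T) : Feasible maxQ S := fun q hq =>
  le_trans (Finset.card_le_card (Finset.inter_subset_inter h (Finset.Subset.refl _))) (hT q hq)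

lemma Fval_insert (minT : List (Pop α)) {S : Finset α} {x : α} (hx : x ∉ S) :
    Fval minT (insert x S) = Fval minT S + nUnmet minT S x := by
  induction minT with
  | nil => rfl
  | cons p l ih =>
    have hcons : nUnmet (p :: l) S x
        = (if x ∈ p.1 ∧ (S ∩ p.1).card < p.2 then 1 else 0) + nUnmet l S x := by
      simp only [nUnmet, List.filter_cons, decide_eq_true_eq]
      split_ifs with h
      · simp only [List.length_cons]; omega
      · simp
    have hhead : min ((insert x S ∩ p.1).card) p.2
        = min ((S ∩ p.1).card) p.2 + (if x ∈ p.1 ∧ (S ∩ p.1).card < p.2 then 1 else 0) := by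
      rw [card_insert_inter x S p.1 hx]
      by_cases hxp : x ∈ p.1
      · simp only [hxp, if_true, true_and]
        split_ifs with hlt <;> omega
      · simp [hxp]
    show min ((insert x S ∩ p.1).card) p.2 + Fval l (insert x S)
        = min ((S ∩ p.1).card) p.2 + Fval l S + nUnmet (p :: l) S x
    rw [hhead, ih, hcons]; omega

lemma V_insert (minT : List (Pop α)) (C S : Finset α) {x : α} (hx : x ∉ S) :
    V minT C (insert x S) = V minT C S + (2 ^ C.card * nUnmet minT S x + w C x) := by
  unfold V wsum
  rw [Fval_insert minT hx, Finset.sum_insert hx, Nat.mul_add]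
  ring

lemma w_lt {C : Finset α} {a : α} (ha : a ∈ C) : w C a < 2 ^ C.card := by
  apply Nat.pow_lt_pow_right (by norm_num)
  apply Finset.card_lt_card
  rw [Finset.ssubset_iff_of_subset (Finset.filter_subset _ _)]
  exact ⟨a, ha, by simp⟩

lemma w_anti {C : Finset α} {a b : α} (hb : b ∈ C) (hab : a < b) : w C b < w C a := by
  apply Nat.pow_lt_pow_right (by norm_num)
  apply Finset.card_lt_card
  rw [Finset.ssubset_iff_of_subset]
  · exact ⟨b, by simp [hb, hab], by simp⟩
  · intro z hz
    simp only [Finset.mem_filter] at hz ⊢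
    exact ⟨hz.1, lt_trans hab hz.2⟩

lemma pick_lt (minT : List (Pop α)) (C S : Finset α) {R : Finset α} (hR : R.Nonempty)
    (hRC : R ⊆ C) {y : α} (hy : y ∈ R) (hne : y ≠ pick minT S hR)
    (hyS : y ∉ S) (hxS : pick minT S hR ∉ S) :
    V minT C (insert y S) < V minT C (insert (pick minT S hR) S) := by
  have hxb : pick minT S hR ∈ bestSet minT S R := Finset.min'_mem _ _
  obtain ⟨hxR, hxmax⟩ := Finset.mem_filter.mp hxb
  rw [V_insert minT C S hyS, V_insert minT C S hxS]
  have hwy : w C y < 2 ^ C.card := w_lt (hRC hy)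
  rcases lt_or_eq_of_le (hxmax y hy) with h | h
  · have h' : nUnmet minT S y + 1 ≤ nUnmet minT S (pick minT S hR) := h
    have h2 : 2 ^ C.card * (nUnmet minT S y + 1)
        ≤ 2 ^ C.card * nUnmet minT S (pick minT S hR) :=
      Nat.mul_le_mul (le_refl _) h'
    rw [Nat.mul_add, Nat.mul_one] at h2
    omega
  · have hyb : y ∈ bestSet minT S R :=
      Finset.mem_filter.mpr ⟨hy, fun d hd => h ▸ hxmax d hd⟩
    have hxy : pick minT S hR < y := lt_of_le_of_ne (Finset.min'_le _ _ hyb) (Ne.symm hne)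
    have hw := w_anti (hRC hy) hxy
    rw [h]
    omega

lemma sum_pair_le {l : List (Pop α)} {f g f' g' : Pop α → ℕ}
    (h : ∀ p ∈ l, f p + g p ≤ f' p + g' p) :
    (l.map f).sum + (l.map g).sum ≤ (l.map f').sum + (l.map g').sum := by
  induction l with
  | nil => simp
  | cons p l ih =>
    simp only [List.map_cons, List.sum_cons]
    have h1 := h p (by simp)
    have h2 := ih fun q hq => h q (by simp [hq])
    omega

/-- The key exchange lemma for laminar families. -/
lemma exchange (maxQ minT : List (Pop α)) (hlam : Laminar (maxQ ++ minT))
    {S T : Finset α} (hS : Feasible maxQ S) (hT : Feasible maxQ T)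
    {x : α} (hxS : x ∈ S) (hxT : x ∉ T) :
    (Feasible maxQ (insert x T) ∧
      Fval minT S + Fval minT T ≤ Fval minT (S.erase x) + Fval minT (insert x T)) ∨
    ∃ y, y ∈ T ∧ y ∉ S ∧ Feasible maxQ (insert y (S.erase x)) ∧
      Feasible maxQ ((insert x T).erase y) ∧
      Fval minT S + Fval minT T ≤
        Fval minT (insert y (S.erase x)) + Fval minT ((insert x T).erase y) := by
  classical
  set L : Finset (Finset α) := ((maxQ ++ minT).map Prod.fst).toFinset with hL
  have hmemL : ∀ q ∈ maxQ ++ minT, q.1 ∈ L := fun q hq =>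
    List.mem_toFinset.mpr (List.mem_map_of_mem hq)
  have hlam' : ∀ P ∈ L, ∀ Q ∈ L, Disjoint P Q ∨ P ⊆ Q ∨ Q ⊆ P := by
    intro P hP Q hQ
    simp only [hL, List.mem_toFinset, List.mem_map] at hP hQ
    obtain ⟨p, hp, rfl⟩ := hP; obtain ⟨q, hq, rfl⟩ := hQ
    exact hlam p hp q hq
  by_cases hB : ∀ P ∈ L, x ∈ P → (T ∩ P).card < (S ∩ P).card
  · left
    constructor
    · intro q hq
      have hb := hS q hq
      have e3 := card_insert_inter x T q.1 hxT
      by_cases hxq : x ∈ q.1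
      · have hk := hB q.1 (hmemL q (List.mem_append_left _ hq)) hxq
        simp only [if_pos hxq] at e3
        omega
      · simp only [if_neg hxq] at e3
        have hb' := hT q hq
        omega
    · apply sum_pair_le
      intro p hp
      have hpL := hmemL p (List.mem_append_right _ hp)
      have e1 := card_erase_inter x S p.1 hxS
      have e3 := card_insert_inter x T p.1 hxT
      by_cases hxq : x ∈ p.1
      · have hk := hB p.1 hpL hxq
        simp only [if_pos hxq] at e1 e3
        omega
      · simp only [if_neg hxq] at e1 e3
        omega
  · right
    push_neg at hB
    set Bad : Finset (Finset α) :=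
      L.filter (fun P => x ∈ P ∧ (S ∩ P).card ≤ (T ∩ P).card) with hBadDef
    have hBne : Bad.Nonempty := by
      obtain ⟨P, hPL, hxP, hle⟩ := hB
      exact ⟨P, Finset.mem_filter.mpr ⟨hPL, hxP, hle⟩⟩
    obtain ⟨p0, hp0, hp0min⟩ := Finset.exists_min_image Bad Finset.card hBne
    obtain ⟨hp0L, hxp0, hp0ST⟩ :
        p0 ∈ L ∧ x ∈ p0 ∧ (S ∩ p0).card ≤ (T ∩ p0).card := by
      have h := Finset.mem_filter.mp hp0; exact ⟨h.1, h.2.1, h.2.2⟩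
    have hmin : ∀ P ∈ Bad, p0 ⊆ P := by
      intro P hP
      obtain ⟨hPL, hxP, _⟩ :
          P ∈ L ∧ x ∈ P ∧ (S ∩ P).card ≤ (T ∩ P).card := by
        have h := Finset.mem_filter.mp hP; exact ⟨h.1, h.2.1, h.2.2⟩
      rcases hlam' p0 hp0L P hPL with hd | hsub | hsup
      · exact absurd hxP (Finset.disjoint_left.mp hd hxp0)
      · exact hsub
      · have h : P = p0 := Finset.eq_of_subset_of_card_le hsup (hp0min P hP)
        rw [h]
    set D : Finset (Finset α) :=
      L.filter (fun P => P ⊆ p0 ∧ x ∉ P ∧ (T ∩ P).card ≤ (S ∩ P).card) with hDdef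
    set M : Finset (Finset α) := D.filter (fun P => ∀ Q ∈ D, P ⊆ Q → P = Q) with hMdef
    have hMD : M ⊆ D := Finset.filter_subset _ _
    have hcover : ∀ P ∈ D, ∃ Q ∈ M, P ⊆ Q := by
      intro P hP
      obtain ⟨Q, hQ, hQmax⟩ := Finset.exists_max_image
        (D.filter fun Q => P ⊆ Q) Finset.card
        ⟨P, Finset.mem_filter.mpr ⟨hP, Finset.Subset.refl _⟩⟩
      obtain ⟨hQD, hPQ⟩ := Finset.mem_filter.mp hQ
      refine ⟨Q, Finset.mem_filter.mpr ⟨hQD, ?_⟩, hPQ⟩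
      intro Q' hQ' hQQ'
      exact Finset.eq_of_subset_of_card_le hQQ'
        (hQmax Q' (Finset.mem_filter.mpr ⟨hQ', hPQ.trans hQQ'⟩))
    have hMdisj : ∀ P ∈ M, ∀ Q ∈ M, P ≠ Q → Disjoint P Q := by
      intro P hP Q hQ hne
      have hPD := hMD hP
      have hQD := hMD hQ
      have hPmax := (Finset.mem_filter.mp hP).2
      have hQmax := (Finset.mem_filter.mp hQ).2
      rcases hlam' P (Finset.mem_filter.mp hPD).1 Q (Finset.mem_filter.mp hQD).1 with h | h | h
      · exact h
      · exact absurd (hPmax Q hQD h) hne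
      · exact absurd (hQmax P hPD h).symm hne
    set U : Finset α := M.biUnion id with hUdef
    have hUp0 : U ⊆ p0 := by
      intro z hz
      obtain ⟨Q, hQ, hzQ⟩ := Finset.mem_biUnion.mp hz
      exact (Finset.mem_filter.mp (hMD hQ)).2.1 hzQ
    have hxU : x ∉ U := by
      intro hx
      obtain ⟨Q, hQ, hxQ⟩ := Finset.mem_biUnion.mp hx
      exact (Finset.mem_filter.mp (hMD hQ)).2.2.1 hxQ
    have hsplit : ∀ X : Finset α,
        (X ∩ p0).card = (X ∩ U).card + (X ∩ (p0 \ U)).card := by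
      intro X
      have hu : X ∩ p0 = (X ∩ U) ∪ (X ∩ (p0 \ U)) := by
        rw [← Finset.inter_union_distrib_left, Finset.union_sdiff_of_subset hUp0]
      rw [hu, Finset.card_union_of_disjoint]
      exact Finset.disjoint_left.mpr fun a ha hb =>
        (Finset.mem_sdiff.mp (Finset.mem_inter.mp hb).2).2 (Finset.mem_inter.mp ha).2
    have hXU : ∀ X : Finset α, (X ∩ U).card = ∑ Q ∈ M, (X ∩ Q).card := by
      intro X
      have h : X ∩ U = M.biUnion fun Q => X ∩ Q := by
        ext z
        simp only [Finset.mem_inter, hUdef, Finset.mem_biUnion, id]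
        tauto
      rw [h, Finset.card_biUnion]
      intro P hP Q hQ hne
      exact Finset.disjoint_of_subset_left Finset.inter_subset_right
        (Finset.disjoint_of_subset_right Finset.inter_subset_right
          (hMdisj P hP Q hQ hne))
    have hsumTS : ∑ Q ∈ M, (T ∩ Q).card ≤ ∑ Q ∈ M, (S ∩ Q).card :=
      Finset.sum_le_sum fun Q hQ => (Finset.mem_filter.mp (hMD hQ)).2.2.2
    have hTA : (S ∩ (p0 \ U)).card ≤ (T ∩ (p0 \ U)).card := by
      have h1 := hsplit S
      have h2 := hsplit T
      have h3 := hXU S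
      have h4 := hXU T
      omega
    have hxA : x ∈ S ∩ (p0 \ U) :=
      Finset.mem_inter.mpr ⟨hxS, Finset.mem_sdiff.mpr ⟨hxp0, hxU⟩⟩
    have hy : ∃ y ∈ T ∩ (p0 \ U), y ∉ S := by
      by_contra h
      push_neg at h
      have hsub : T ∩ (p0 \ U) ⊆ (S ∩ (p0 \ U)).erase x := by
        intro z hz
        refine Finset.mem_erase.mpr ⟨fun he => hxT (he ▸ (Finset.mem_inter.mp hz).1), ?_⟩
        exact Finset.mem_inter.mpr ⟨h z hz, (Finset.mem_inter.mp hz).2⟩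
      have hc := Finset.card_le_card hsub
      rw [Finset.card_erase_of_mem hxA] at hc
      have hpos : 0 < (S ∩ (p0 \ U)).card := Finset.card_pos.mpr ⟨x, hxA⟩
      omega
    obtain ⟨y, hyA, hyS⟩ := hy
    have hyT : y ∈ T := (Finset.mem_inter.mp hyA).1
    have hyp0 : y ∈ p0 := (Finset.mem_sdiff.mp (Finset.mem_inter.mp hyA).2).1
    have hyU : y ∉ U := (Finset.mem_sdiff.mp (Finset.mem_inter.mp hyA).2).2
    have hyx : y ≠ x := fun h => hxT (h ▸ hyT)
    have K1 : ∀ P ∈ L, x ∈ P → y ∉ P → (T ∩ P).card < (S ∩ P).card := by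
      intro P hP hxP hyP
      by_contra h
      push_neg at h
      exact hyP (hmin P (Finset.mem_filter.mpr ⟨hP, hxP, h⟩) hyp0)
    have K2 : ∀ P ∈ L, y ∈ P → x ∉ P → (S ∩ P).card < (T ∩ P).card := by
      intro P hP hyP hxP
      by_contra h
      push_neg at h
      have hPp0 : P ⊆ p0 := by
        rcases hlam' P hP p0 hp0L with hd | hs | hs
        · exact absurd hyp0 (Finset.disjoint_left.mp hd hyP)
        · exact hs
        · exact absurd (hs hxp0) hxP
      obtain ⟨Q, hQ, hPQ⟩ := hcover P (Finset.mem_filter.mpr ⟨hP, hPp0, hxP, h⟩)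
      exact hyU (Finset.mem_biUnion.mpr ⟨Q, hQ, hPQ hyP⟩)
    have hySx : y ∉ S.erase x := fun h => hyS (Finset.mem_of_mem_erase h)
    have hyxT : y ∈ insert x T := Finset.mem_insert_of_mem hyT
    refine ⟨y, hyT, hyS, ?_, ?_, ?_⟩
    · intro q hq
      have hb := hS q hq
      have hb' := hT q hq
      have e1 := card_erase_inter x S q.1 hxS
      have e2 := card_insert_inter y (S.erase x) q.1 hySx
      by_cases hxq : x ∈ q.1 <;> by_cases hyq : y ∈ q.1
      · simp only [if_pos hxq, if_pos hyq] at e1 e2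
        omega
      · simp only [if_pos hxq, if_neg hyq] at e1 e2
        omega
      · simp only [if_neg hxq, if_pos hyq] at e1 e2
        have hk := K2 q.1 (hmemL q (List.mem_append_left _ hq)) hyq hxq
        omega
      · simp only [if_neg hxq, if_neg hyq] at e1 e2
        omega
    · intro q hq
      have hb := hS q hq
      have hb' := hT q hq
      have e3 := card_insert_inter x T q.1 hxT
      have e4 := card_erase_inter y (insert x T) q.1 hyxT
      by_cases hxq : x ∈ q.1 <;> by_cases hyq : y ∈ q.1
      · simp only [if_pos hxq, if_pos hyq] at e3 e4
        omega
      · simp only [if_pos hxq, if_neg hyq] at e3 e4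
        have hk := K1 q.1 (hmemL q (List.mem_append_left _ hq)) hxq hyq
        omega
      · simp only [if_neg hxq, if_pos hyq] at e3 e4
        omega
      · simp only [if_neg hxq, if_neg hyq] at e3 e4
        omega
    · apply sum_pair_le
      intro p hp
      have hpL := hmemL p (List.mem_append_right _ hp)
      have e1 := card_erase_inter x S p.1 hxS
      have e2 := card_insert_inter y (S.erase x) p.1 hySx
      have e3 := card_insert_inter x T p.1 hxT
      have e4 := card_erase_inter y (insert x T) p.1 hyxT
      by_cases hxq : x ∈ p.1 <;> by_cases hyq : y ∈ p.1
      · simp only [if_pos hxq, if_pos hyq] at e1 e2 e3 e4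
        omega
      · simp only [if_pos hxq, if_neg hyq] at e1 e2 e3 e4
        have hk := K1 p.1 hpL hxq hyq
        omega
      · simp only [if_neg hxq, if_pos hyq] at e1 e2 e3 e4
        have hk := K2 p.1 hpL hyq hxq
        omega
      · simp only [if_neg hxq, if_neg hyq] at e1 e2 e3 e4
        omega

lemma choice2Go_eq (maxQ minT : List (Pop α)) (R S : Finset α) :
    choice2Go maxQ minT R S = if hR : R.Nonempty then
      choice2Go maxQ minT (R.erase (pick minT S hR))
        (if Feasible maxQ (insert (pick minT S hR) S) then insert (pick minT S hR) S else S)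
    else S := by
  rw [choice2Go]

/-- The greedy Algorithm 2 reaches any maximizer of `V`. -/
lemma greedy_opt (maxQ minT : List (Pop α)) (hlam : Laminar (maxQ ++ minT))
    (C : Finset α) {C' : Finset α} (hC' : C' ⊆ C) {O : Finset α}
    (hOC : O ⊆ C') (hOF : Feasible maxQ O)
    (hOmax : ∀ T ⊆ C', Feasible maxQ T → V minT C T ≤ V minT C O) :
    ∀ R : Finset α, ∀ S : Finset α, R ⊆ C' → S ⊆ O → O ⊆ S ∪ R → Disjoint S R →
      choice2Go maxQ minT R S = O := by
  intro R
  induction R using Finset.strongInductionOn with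
  | _ R ih =>
    intro S hRC hSO hOSR hdisj
    rw [choice2Go_eq]
    by_cases hR : R.Nonempty
    · rw [dif_pos hR]
      have hxR : pick minT S hR ∈ R := pick_mem minT S hR
      set x := pick minT S hR with hxdef
      have hxS : x ∉ S := fun h => Finset.disjoint_left.mp hdisj h hxR
      have hxC' : x ∈ C' := hRC hxR
      by_cases hfeas : Feasible maxQ (insert x S)
      · rw [if_pos hfeas]
        have hxO : x ∈ O := by
          by_contra hxO
          rcases exchange maxQ minT hlam (S := insert x S) (T := O) hfeas hOF
              (Finset.mem_insert_self x S) hxO with ⟨hfI, hF⟩ | ⟨y, hyO, hySx, hf1, hf2, hF⟩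
          · rw [Finset.erase_insert hxS] at hF
            have hKF : 2 ^ C.card * (Fval minT (insert x S) + Fval minT O)
                ≤ 2 ^ C.card * (Fval minT S + Fval minT (insert x O)) :=
              Nat.mul_le_mul (le_refl _) hF
            rw [Nat.mul_add, Nat.mul_add] at hKF
            have hw1 : wsum C (insert x S) = wsum C S + w C x := by
              unfold wsum; rw [Finset.sum_insert hxS]; ring
            have hw2 : wsum C (insert x O) = wsum C O + w C x := by
              unfold wsum; rw [Finset.sum_insert hxO]; ring
            have h3 : V minT C (insert x O) ≤ V minT C O :=
              hOmax _ (Finset.insert_subset hxC' hOC) hfI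
            have hwx : 0 < w C x := Nat.pow_pos (by norm_num)
            have hmono : 2 ^ C.card * Fval minT S ≤ 2 ^ C.card * Fval minT (insert x S) :=
              Nat.mul_le_mul (le_refl _) (by rw [Fval_insert minT hxS]; omega)
            unfold V at h3
            omega
          · rw [Finset.erase_insert hxS] at hf1 hF
            have hyS : y ∉ S := fun h => hySx (Finset.mem_insert_of_mem h)
            have hyx : y ≠ x := fun h => hySx (h ▸ Finset.mem_insert_self x S)
            have hyR : y ∈ R := by
              rcases Finset.mem_union.mp (hOSR hyO) with h | h
              · exact absurd h hyS
              · exact h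
            have hpk : V minT C (insert y S) < V minT C (insert x S) :=
              pick_lt minT C S hR (hRC.trans hC') hyR hyx hyS hxS
            have hKF : 2 ^ C.card * (Fval minT (insert x S) + Fval minT O)
                ≤ 2 ^ C.card * (Fval minT (insert y S) + Fval minT ((insert x O).erase y)) :=
              Nat.mul_le_mul (le_refl _) hF
            rw [Nat.mul_add, Nat.mul_add] at hKF
            have hw1 : wsum C (insert y S) = wsum C S + w C y := by
              unfold wsum; rw [Finset.sum_insert hyS]; ring
            have hw2 : wsum C (insert x S) = wsum C S + w C x := by
              unfold wsum; rw [Finset.sum_insert hxS]; ring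
            have hw3 : wsum C ((insert x O).erase y) + w C y = wsum C (insert x O) :=
              Finset.sum_erase_add _ _ (Finset.mem_insert_of_mem hyO)
            have hw4 : wsum C (insert x O) = wsum C O + w C x := by
              unfold wsum; rw [Finset.sum_insert hxO]; ring
            have hsub : (insert x O).erase y ⊆ C' :=
              (Finset.erase_subset _ _).trans (Finset.insert_subset hxC' hOC)
            have h3 : V minT C ((insert x O).erase y) ≤ V minT C O := hOmax _ hsub hf2
            unfold V at h3 hpk
            omega
        refine ih (R.erase x) (Finset.erase_ssubset hxR) _
          ((Finset.erase_subset _ _).trans hRC) (Finset.insert_subset hxO hSO) ?_ ?_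
        · intro z hz
          rcases Finset.mem_union.mp (hOSR hz) with h | h
          · exact Finset.mem_union_left _ (Finset.mem_insert_of_mem h)
          · by_cases hzx : z = x
            · exact Finset.mem_union_left _ (hzx ▸ Finset.mem_insert_self x S)
            · exact Finset.mem_union_right _ (Finset.mem_erase.mpr ⟨hzx, h⟩)
        · rw [Finset.disjoint_left]
          intro z hz hz'
          rcases Finset.mem_insert.mp hz with h | h
          · exact Finset.notMem_erase x R (h ▸ hz')
          · exact Finset.disjoint_left.mp hdisj h (Finset.mem_of_mem_erase hz')
      · rw [if_neg hfeas]
        have hxO : x ∉ O := fun hxO =>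
          hfeas (feasible_mono (Finset.insert_subset hxO hSO) hOF)
        refine ih (R.erase x) (Finset.erase_ssubset hxR) _
          ((Finset.erase_subset _ _).trans hRC) hSO ?_
          (Finset.disjoint_of_subset_right (Finset.erase_subset _ _) hdisj)
        intro z hz
        rcases Finset.mem_union.mp (hOSR hz) with h | h
        · exact Finset.mem_union_left _ h
        · exact Finset.mem_union_right _
            (Finset.mem_erase.mpr ⟨fun he => hxO (he ▸ hz), h⟩)
    · rw [dif_neg hR]
      have hRe : R = ∅ := Finset.not_nonempty_iff_eq_empty.mp hR
      apply Finset.Subset.antisymm hSO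
      intro z hz
      rcases Finset.mem_union.mp (hOSR hz) with h | h
      · exact h
      · rw [hRe] at h; exact absurd h (Finset.notMem_empty z)

end SubstAux

open SubstAux

/-- If the populations of a PMA are laminar and the populations with
positive minimum targets form a union of pairwise-disjoint chains, then the Algorithm 2
choice function is substitutable: `Ch(C) \ {c} ⊆ Ch(C \ {c})` for every `c ∈ C`. -/
theorem choice2_substitutable {α : Type*} [DecidableEq α] [LinearOrder α]
    (maxQ minT : List (Pop α))
    (hlam : Laminar (maxQ ++ minT))
    (hchains : UnionOfDisjointChains (minTargetSets minT))
    (C : Finset α) (c : α) (hc : c ∈ C) :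
    (choice2 maxQ minT C).erase c ⊆ choice2 maxQ minT (C.erase c) := by
  classical
  have hfeas_empty : Feasible maxQ (∅ : Finset α) := by
    intro q hq; simp
  have hmax_ex : ∀ C'' : Finset α,
      ∃ O, (O ⊆ C'' ∧ Feasible maxQ O) ∧
        ∀ T ⊆ C'', Feasible maxQ T → V minT C T ≤ V minT C O := by
    intro C''
    obtain ⟨O, hO, hOmax⟩ := Finset.exists_max_image
      (C''.powerset.filter fun T => Feasible maxQ T) (V minT C)
      ⟨∅, Finset.mem_filter.mpr ⟨Finset.mem_powerset.mpr (Finset.empty_subset _), hfeas_empty⟩⟩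
    rw [Finset.mem_filter, Finset.mem_powerset] at hO
    exact ⟨O, hO, fun T hT hF =>
      hOmax T (Finset.mem_filter.mpr ⟨Finset.mem_powerset.mpr hT, hF⟩)⟩
  obtain ⟨O, ⟨hOC, hOF⟩, hOmax⟩ := hmax_ex C
  obtain ⟨O', ⟨hO'C, hO'F⟩, hO'max⟩ := hmax_ex (C.erase c)
  have hg : choice2 maxQ minT C = O :=
    greedy_opt maxQ minT hlam C (Finset.Subset.refl C) hOC hOF hOmax C ∅
      (Finset.Subset.refl C) (Finset.empty_subset _) (by simpa using hOC)
      (Finset.disjoint_left.mpr fun a ha => absurd ha (Finset.notMem_empty a))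
  have hg' : choice2 maxQ minT (C.erase c) = O' :=
    greedy_opt maxQ minT hlam C (Finset.erase_subset c C) hO'C hO'F hO'max (C.erase c) ∅
      (Finset.Subset.refl _) (Finset.empty_subset _) (by simpa using hO'C)
      (Finset.disjoint_left.mpr fun a ha => absurd ha (Finset.notMem_empty a))
  rw [hg, hg']
  intro x hx
  obtain ⟨hxc, hxO⟩ := Finset.mem_erase.mp hx
  by_contra hxO'
  have hxC : x ∈ C := hOC hxO
  have hxCc : x ∈ C.erase c := Finset.mem_erase.mpr ⟨hxc, hxC⟩
  rcases exchange maxQ minT hlam (S := O) (T := O') hOF hO'F hxO hxO' with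
    ⟨hfI, hF⟩ | ⟨y, hyO', hyO, hf1, hf2, hF⟩
  · have hKF : 2 ^ C.card * (Fval minT O + Fval minT O')
        ≤ 2 ^ C.card * (Fval minT (O.erase x) + Fval minT (insert x O')) :=
      Nat.mul_le_mul (le_refl _) hF
    rw [Nat.mul_add, Nat.mul_add] at hKF
    have hw1 : wsum C (O.erase x) + w C x = wsum C O := Finset.sum_erase_add _ _ hxO
    have hw2 : wsum C (insert x O') = wsum C O' + w C x := by
      unfold wsum; rw [Finset.sum_insert hxO']; ring
    have h3 : V minT C (insert x O') ≤ V minT C O' :=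
      hO'max _ (Finset.insert_subset hxCc hO'C) hfI
    have h4 : V minT C O ≤ V minT C (O.erase x) := by
      unfold V at h3 ⊢; omega
    have h5 : ∀ T ⊆ C, Feasible maxQ T → V minT C T ≤ V minT C (O.erase x) :=
      fun T hT hFt => le_trans (hOmax T hT hFt) h4
    have h6 : choice2 maxQ minT C = O.erase x :=
      greedy_opt maxQ minT hlam C (Finset.Subset.refl C)
        ((Finset.erase_subset _ _).trans hOC)
        (feasible_mono (Finset.erase_subset _ _) hOF) h5 C ∅
        (Finset.Subset.refl C) (Finset.empty_subset _)
        (by simpa using (Finset.erase_subset _ _).trans hOC)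
        (Finset.disjoint_left.mpr fun a ha => absurd ha (Finset.notMem_empty a))
    rw [hg] at h6
    exact Finset.notMem_erase x O (h6 ▸ hxO)
  · have hyx : y ≠ x := fun h => hyO (h ▸ hxO)
    have hyOx : y ∉ O.erase x := fun h => hyO (Finset.mem_of_mem_erase h)
    have hKF : 2 ^ C.card * (Fval minT O + Fval minT O')
        ≤ 2 ^ C.card * (Fval minT (insert y (O.erase x)) + Fval minT ((insert x O').erase y)) :=
      Nat.mul_le_mul (le_refl _) hF
    rw [Nat.mul_add, Nat.mul_add] at hKF
    have hw1 : wsum C (insert y (O.erase x)) = wsum C (O.erase x) + w C y := by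
      unfold wsum; rw [Finset.sum_insert hyOx]; ring
    have hw2 : wsum C (O.erase x) + w C x = wsum C O := Finset.sum_erase_add _ _ hxO
    have hw3 : wsum C ((insert x O').erase y) + w C y = wsum C (insert x O') :=
      Finset.sum_erase_add _ _ (Finset.mem_insert_of_mem hyO')
    have hw4 : wsum C (insert x O') = wsum C O' + w C x := by
      unfold wsum; rw [Finset.sum_insert hxO']; ring
    have hsub : (insert x O').erase y ⊆ C.erase c :=
      (Finset.erase_subset _ _).trans (Finset.insert_subset hxCc hO'C)
    have h3 : V minT C ((insert x O').erase y) ≤ V minT C O' := hO'max _ hsub hf2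
    have h4 : V minT C O ≤ V minT C (insert y (O.erase x)) := by
      unfold V at h3 ⊢; omega
    have h5 : ∀ T ⊆ C, Feasible maxQ T → V minT C T ≤ V minT C (insert y (O.erase x)) :=
      fun T hT hFt => le_trans (hOmax T hT hFt) h4
    have hO2C : insert y (O.erase x) ⊆ C :=
      Finset.insert_subset (Finset.erase_subset c C (hO'C hyO'))
        ((Finset.erase_subset _ _).trans hOC)
    have h6 : choice2 maxQ minT C = insert y (O.erase x) :=
      greedy_opt maxQ minT hlam C (Finset.Subset.refl C) hO2C hf1 h5 C ∅
        (Finset.Subset.refl C) (Finset.empty_subset _) (by simpa using hO2C)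
        (Finset.disjoint_left.mpr fun a ha => absurd ha (Finset.notMem_empty a))
    rw [hg] at h6
    have hmem : x ∈ insert y (O.erase x) := h6 ▸ hxO
    rcases Finset.mem_insert.mp hmem with h | h
    · exact hyx h.symm
    · exact Finset.notMem_erase x O h
end
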